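/- arXiv:2604.21059 — 3 statements merged into one kernel-verified Lean document; each statement's English description precedes it below -/
import Mathlib

section
/- Let G be a free product of cyclic groups with the natural alphabet S of nontrivial powers of the generators within each factor, and let reduced words be those with no two adjacent letters from the same factor. If g ∈ G is represented by a cyclically reduced word of length at least 2 that is not self-overlapping, then the Brooks counting function φ_g(h) = C_g(h) − C_{g^{-1}}(h), counting occurrences of the reduced word of g minus occurrences of the reduced word of g^{-1} as subwords of the reduced word of h, is a quasimorphism with defect D(φ_g) ≤ 3. -/
open Monoid

variable {ι : Type*} [DecidableEq ι] {M : ι → Type*} [∀ i, Group (M i)]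
  [∀ i, DecidableEq (M i)] [∀ i, IsCyclic (M i)]

/-- The reduced word (as a list of letters) representing an element of a free product. -/
noncomputable def wordOf (g : CoprodI M) : List (Σ i, M i) :=
  (CoprodI.Word.equiv g).toList

/-- The number of occurrences of `w` as a (contiguous) subword of `l`. -/
def countOcc (w l : List (Σ i, M i)) : ℕ :=
  ((List.range (l.length + 1)).filter fun k => decide ((l.drop k).take w.length = w)).length

/-- The Brooks counting function `φ_g(h) = C_g(h) - C_{g⁻¹}(h)`. -/
noncomputable def brooks (g h : CoprodI M) : ℤ :=
  (countOcc (wordOf g) (wordOf h) : ℤ) - (countOcc (wordOf g⁻¹) (wordOf h) : ℤ)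

/-- A reduced word is cyclically reduced if (when it has length at least two) its first and
last letters lie in different factors. -/
def CyclicallyReduced (l : List (Σ i, M i)) : Prop :=
  2 ≤ l.length → ∀ x ∈ l.head?, ∀ y ∈ l.getLast?, x.1 ≠ y.1

/-- A word is self-overlapping if it can be written as `v ++ u ++ v` with `v` nontrivial. -/
def SelfOverlapping (l : List (Σ i, M i)) : Prop :=
  ∃ v u : List (Σ i, M i), v ≠ [] ∧ l = v ++ u ++ v

/-! ### Auxiliary counting lemmas -/

theorem countOcc_eq_countP (w l : List (Σ i, M i)) :
    countOcc w l =
      (List.range (l.length + 1)).countP fun k => decide ((l.drop k).take w.length = w) :=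
  List.countP_eq_length_filter.symm

theorem occ_add_le {p l : List (Σ i, M i)} (hp : p ≠ []) {k : ℕ}
    (h : (l.drop k).take p.length = p) : k + p.length ≤ l.length := by
  have h1 : ((l.drop k).take p.length).length = p.length := by rw [h]
  rw [List.length_take, List.length_drop] at h1
  have h2 : p.length ≠ 0 := by simpa using hp
  omega

theorem occ_append_left {p u v : List (Σ i, M i)} {k : ℕ} (h : k + p.length ≤ u.length) :
    (((u ++ v).drop k).take p.length = p) ↔ ((u.drop k).take p.length = p) := by
  rw [List.drop_append_of_le_length (by omega),
    List.take_append_of_le_length (by rw [List.length_drop]; omega)]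

theorem countOcc_nil {p : List (Σ i, M i)} (hp : p ≠ []) : countOcc p [] = 0 := by
  rcases p with _ | ⟨x, p⟩
  · exact absurd rfl hp
  · simp [countOcc, List.range_succ]

/-- Crossing-occurrence count. -/
def xcnt (p w : List (Σ i, M i)) (c d : ℕ) : ℕ :=
  (List.range d).countP fun k =>
    decide ((w.drop k).take p.length = p) && !decide (k + p.length ≤ c)

theorem countP_and_not (l : List ℕ) (f g : ℕ → Bool) :
    l.countP f = l.countP (fun k => f k && g k) + l.countP (fun k => f k && !g k) := by
  induction l with
  | nil => simp
  | cons x l ih =>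
    simp only [List.countP_cons, ih]
    cases hf : f x <;> cases hg : g x <;> simp [hf, hg] <;> omega

theorem countOcc_split (p u m v : List (Σ i, M i)) (hp : p ≠ []) (hm : m.length ≤ 1) :
    countOcc p (u ++ m ++ v) =
      countOcc p u + xcnt p (u ++ m ++ v) u.length (u.length + m.length) + countOcc p v := by
  have hlen : (u ++ m ++ v).length + 1 = (u.length + m.length) + (v.length + 1) := by
    simp [List.length_append]; omega
  rw [countOcc_eq_countP, hlen, List.range_add, List.countP_append, List.countP_map]
  have hright : ((List.range (v.length + 1)).countP
      ((fun k => decide (((u ++ m ++ v).drop k).take p.length = p)) ∘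
        fun x => u.length + m.length + x)) = countOcc p v := by
    rw [countOcc_eq_countP]
    apply List.countP_congr
    intro k _
    simp only [Function.comp_apply]
    have : (u ++ m ++ v).drop (u.length + m.length + k) = v.drop k := by
      have h1 : u.length + m.length + k = (u ++ m).length + k := by
        rw [List.length_append]
      rw [h1, List.drop_length_add_append]
    rw [this]
  rw [hright]
  have hleft : (List.range (u.length + m.length)).countP
      (fun k => decide (((u ++ m ++ v).drop k).take p.length = p)) =
      countOcc p u + xcnt p (u ++ m ++ v) u.length (u.length + m.length) := by
    rw [countP_and_not (List.range (u.length + m.length))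
      (fun k => decide (((u ++ m ++ v).drop k).take p.length = p))
      (fun k => decide (k + p.length ≤ u.length))]
    congr 1
    -- the (f && g) part equals countOcc p u
    have step1 : (List.range (u.length + m.length)).countP
        (fun k => decide (((u ++ m ++ v).drop k).take p.length = p) &&
          decide (k + p.length ≤ u.length)) =
        (List.range (u.length + m.length)).countP
        (fun k => decide ((u.drop k).take p.length = p)) := by
      apply List.countP_congr
      intro k _
      by_cases hg : k + p.length ≤ u.length
      · have h1 : ((u ++ (m ++ v)).drop k).take p.length = p ↔ (u.drop k).take p.length = p :=
          occ_append_left hg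
        simp [hg, h1]
      · have h1 : ¬ ((u.drop k).take p.length = p) := fun h => hg (occ_add_le hp h)
        simp [hg, h1]
    rw [step1]
    rcases Nat.le_one_iff_eq_zero_or_eq_one.mp hm with h0 | h1
    · rw [h0, Nat.add_zero, countOcc_eq_countP]
      have hr : List.range (u.length + 1) = List.range u.length ++ [u.length] :=
        List.range_succ (n := u.length)
      rw [hr, List.countP_append]
      have hlast : List.countP (fun k => decide ((u.drop k).take p.length = p)) [u.length] = 0 := by
        simp only [List.countP_cons, List.countP_nil]
        simp [List.drop_length, Ne.symm hp]
      omega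
    · rw [h1, countOcc_eq_countP]
  omega

theorem nodup_length_le_one {l : List ℕ} (hn : l.Nodup) (h : ∀ a ∈ l, ∀ b ∈ l, a = b) :
    l.length ≤ 1 := by
  rcases l with _ | ⟨a, _ | ⟨b, l⟩⟩
  · simp
  · simp
  · exfalso
    have hab : a = b := h a (by simp) b (by simp)
    simp [hab] at hn

theorem so_of_border (p : List (Σ i, M i)) :
    ∀ t, 0 < t → t < p.length → p.take t = p.drop (p.length - t) → SelfOverlapping p := by
  intro t
  induction t using Nat.strong_induction_on with
  | _ t ih =>
    intro ht0 htlen hb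
    by_cases h2 : 2 * t ≤ p.length
    · refine ⟨p.take t, (p.drop t).take (p.length - 2 * t), ?_, ?_⟩
      · have : (p.take t).length = t := by rw [List.length_take]; omega
        intro hnil; rw [hnil] at this; simp at this; omega
      · conv_lhs => rw [← List.take_append_drop t p]
        rw [List.append_assoc]
        congr 1
        conv_lhs => rw [← List.take_append_drop (p.length - 2 * t) (p.drop t)]
        congr 1
        rw [List.drop_drop]
        have he : t + (p.length - 2 * t) = p.length - t := by omega
        rw [he, ← hb]
    · set a := p.length - t with ha
      have hb' : p.take t = p.drop a := hb
      have key : p.drop (2 * a) = p.take (t - a) := by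
        have d1 : p.drop (2 * a) = (p.drop a).drop a := by
          rw [List.drop_drop]; congr 1; omega
        rw [d1, ← hb', List.drop_take, ← hb', List.take_take]
        congr 1
        omega
      refine ih (t - a) (by omega) (by omega) (by omega) ?_
      have : p.length - (t - a) = 2 * a := by omega
      rw [this, key]

theorem so_of_two_occ {p w : List (Σ i, M i)} {k k' : ℕ}
    (h1 : (w.drop k).take p.length = p) (h2 : (w.drop k').take p.length = p)
    (hkk : k < k') (hlt : k' < k + p.length) : SelfOverlapping p := by
  set s := k' - k with hs
  have hdrop : p.drop s = (w.drop k').take (p.length - s) := by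
    conv_lhs => rw [← h1]
    rw [List.drop_take, List.drop_drop]
    have he : k + s = k' := by omega
    rw [he]
  have htake : p.take (p.length - s) = (w.drop k').take (p.length - s) := by
    have h3 := congrArg (List.take (p.length - s)) h2
    rw [List.take_take, min_eq_left (Nat.sub_le _ _)] at h3
    exact h3.symm
  refine so_of_border p (p.length - s) (by omega) (by omega) ?_
  have : p.length - (p.length - s) = s := by omega
  rw [this, htake, hdrop]

theorem xcnt_le_one {p : List (Σ i, M i)} (w : List (Σ i, M i)) {c d : ℕ} (hd : d ≤ c + 1)
    (hso : ¬ SelfOverlapping p) : xcnt p w c d ≤ 1 := by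
  rw [xcnt, List.countP_eq_length_filter]
  apply nodup_length_le_one ((List.nodup_range (n := d)).filter _)
  intro k hk k' hk'
  by_contra hne
  rw [List.mem_filter, List.mem_range] at hk hk'
  obtain ⟨hkd, hkp⟩ := hk
  obtain ⟨hkd', hkp'⟩ := hk'
  simp only [Bool.and_eq_true, decide_eq_true_eq, Bool.not_eq_true', decide_eq_false_iff_not] at hkp hkp'
  have h1 := hkp.1; have h2 := hkp'.1
  have hcb := hkp.2; have hcb' := hkp'.2
  rcases Nat.lt_or_ge k k' with hlt | hge
  · exact hso (so_of_two_occ h1 h2 hlt (by omega))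
  · have hlt : k' < k := by omega
    exact hso (so_of_two_occ h2 h1 hlt (by omega))

/-! ### invRev -/

def invRev (l : List (Σ i, M i)) : List (Σ i, M i) :=
  (l.map fun x => (⟨x.1, x.2⁻¹⟩ : Σ i, M i)).reverse

theorem invRev_nil : invRev ([] : List (Σ i, M i)) = [] := rfl

theorem invRev_cons (x : Σ i, M i) (l : List (Σ i, M i)) :
    invRev (x :: l) = invRev l ++ [⟨x.1, x.2⁻¹⟩] := by simp [invRev]

theorem invRev_append (l₁ l₂ : List (Σ i, M i)) :
    invRev (l₁ ++ l₂) = invRev l₂ ++ invRev l₁ := by simp [invRev]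

@[simp] theorem invRev_length (l : List (Σ i, M i)) : (invRev l).length = l.length := by
  simp [invRev]

theorem invRev_invRev (l : List (Σ i, M i)) : invRev (invRev l) = l := by
  induction l with
  | nil => rfl
  | cons x l ih => rw [invRev_cons, invRev_append, ih, invRev_cons, invRev_nil]; simp

theorem invRev_ne_nil {l : List (Σ i, M i)} (h : l ≠ []) : invRev l ≠ [] := by
  intro h2
  apply h
  have := congrArg List.length h2
  simp at this
  exact this

theorem so_invRev {l : List (Σ i, M i)} (h : SelfOverlapping l) :
    SelfOverlapping (invRev l) := by
  obtain ⟨v, u, hv, rfl⟩ := h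
  exact ⟨invRev v, invRev u, invRev_ne_nil hv, by
    rw [invRev_append, invRev_append, List.append_assoc]⟩

theorem prefix_invRev_iff {p l : List (Σ i, M i)} : p <+: l ↔ invRev p <:+ invRev l := by
  constructor
  · rintro ⟨t, rfl⟩
    exact ⟨invRev t, (invRev_append _ _).symm⟩
  · rintro ⟨t, ht⟩
    refine ⟨invRev t, ?_⟩
    have := congrArg invRev ht
    rwa [invRev_append, invRev_invRev, invRev_invRev] at this

/-! ### cons and snoc recursions for countOcc -/

theorem countOcc_cons (p : List (Σ i, M i)) (x : Σ i, M i) (l : List (Σ i, M i)) :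
    countOcc p (x :: l) = (if p <+: (x :: l) then 1 else 0) + countOcc p l := by
  rw [countOcc_eq_countP, countOcc_eq_countP]
  have h1 : (x :: l).length + 1 = (l.length + 1) + 1 := by simp
  have h2 : ∀ k, ((fun k => decide (((x :: l).drop k).take p.length = p)) ∘ Nat.succ) k =
      (fun k => decide ((l.drop k).take p.length = p)) k := by
    intro k
    simp [List.drop_succ_cons]
  rw [h1, List.range_succ_eq_map, List.countP_cons, List.countP_map,
    List.countP_congr fun k _ => by rw [h2 k]]
  simp only [List.drop_zero, decide_eq_true_eq]
  have h4 : ((x :: l).take p.length = p) ↔ p <+: (x :: l) :=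
    ⟨fun h => List.prefix_iff_eq_take.mpr h.symm, fun h => (List.prefix_iff_eq_take.mp h).symm⟩
  rw [if_congr h4 rfl rfl]
  omega

theorem countOcc_snoc (p : List (Σ i, M i)) (hp : p ≠ []) :
    ∀ (l : List (Σ i, M i)) (x : Σ i, M i),
    countOcc p (l ++ [x]) = countOcc p l + (if p <:+ (l ++ [x]) then 1 else 0) := by
  intro l
  induction l with
  | nil =>
    intro x
    rw [List.nil_append, countOcc_cons, countOcc_nil hp]
    have h4 : (p <+: [x]) ↔ (p <:+ [x]) := by
      constructor
      · intro h
        have := h.eq_of_length_le (by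
          have := h.length_le
          have hp' : p.length ≠ 0 := by simpa using hp
          simp at this ⊢
          omega)
        rw [this]
      · intro h
        have := h.eq_of_length_le (by
          have := h.length_le
          have hp' : p.length ≠ 0 := by simpa using hp
          simp at this ⊢
          omega)
        rw [this]
    rw [if_congr h4 rfl rfl]
    omega
  | cons y l ih =>
    intro x
    rw [List.cons_append, countOcc_cons, ih x, countOcc_cons]
    by_cases hlen : p.length ≤ l.length + 1
    · have e1 : (p <+: y :: (l ++ [x])) ↔ (p <+: y :: l) := by
        rw [List.prefix_iff_eq_take, List.prefix_iff_eq_take]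
        have : (y :: (l ++ [x])).take p.length = (y :: l).take p.length := by
          rw [show (y :: (l ++ [x])) = (y :: l) ++ [x] by simp,
            List.take_append_of_le_length (by simpa)]
        rw [this]
      have e2 : (p <:+ y :: (l ++ [x])) ↔ (p <:+ l ++ [x]) := by
        rw [List.suffix_iff_eq_drop, List.suffix_iff_eq_drop]
        have hl1 : (y :: (l ++ [x])).length - p.length = ((l ++ [x]).length - p.length) + 1 := by
          simp; omega
        rw [hl1, List.drop_succ_cons]
      rw [if_congr e1 rfl rfl, if_congr e2 rfl rfl]
      omega
    · by_cases hlen2 : p.length = l.length + 2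
      · have hA : ¬ (p <+: y :: l) := by
          intro h
          have := h.length_le
          simp at this
          omega
        have hB : ¬ (p <:+ l ++ [x]) := by
          intro h
          have := h.length_le
          simp at this
          omega
        have e : (p <+: y :: (l ++ [x])) ↔ (p <:+ y :: (l ++ [x])) := by
          constructor
          · intro h
            have := h.eq_of_length_le (by simp; omega)
            rw [this]
          · intro h
            have := h.eq_of_length_le (by simp; omega)
            rw [this]
        rw [if_neg hA, if_neg hB, if_congr e rfl rfl]
        omega
      · have hA : ¬ (p <+: y :: l) := by
          intro h; have := h.length_le; simp at this; omega
        have hB : ¬ (p <:+ l ++ [x]) := by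
          intro h; have := h.length_le; simp at this; omega
        have hA' : ¬ (p <+: y :: (l ++ [x])) := by
          intro h; have := h.length_le; simp at this; omega
        have hB' : ¬ (p <:+ y :: (l ++ [x])) := by
          intro h; have := h.length_le; simp at this; omega
        rw [if_neg hA, if_neg hB, if_neg hA', if_neg hB']
        omega

theorem countOcc_invRev (p : List (Σ i, M i)) (hp : p ≠ []) :
    ∀ l : List (Σ i, M i), countOcc p l = countOcc (invRev p) (invRev l) := by
  intro l
  induction l with
  | nil => rw [invRev_nil, countOcc_nil hp, countOcc_nil (invRev_ne_nil hp)]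
  | cons x l ih =>
    rw [countOcc_cons, invRev_cons, countOcc_snoc _ (invRev_ne_nil hp), ← ih]
    have e : (p <+: x :: l) ↔ (invRev p <:+ invRev l ++ [⟨x.1, x.2⁻¹⟩]) := by
      rw [← invRev_cons]
      exact prefix_invRev_iff
    rw [if_congr e rfl rfl]
    omega

/-! ### Words of the free product -/

def prodList (L : List (Σ i, M i)) : CoprodI M := (L.map fun l => CoprodI.of l.snd).prod

theorem prodList_nil : prodList ([] : List (Σ i, M i)) = 1 := rfl

theorem prodList_cons (x : Σ i, M i) (L : List (Σ i, M i)) :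
    prodList (x :: L) = CoprodI.of x.2 * prodList L := by simp [prodList]

theorem prodList_singleton (x : Σ i, M i) : prodList [x] = CoprodI.of x.2 := by
  simp [prodList]

theorem prodList_append (L₁ L₂ : List (Σ i, M i)) :
    prodList (L₁ ++ L₂) = prodList L₁ * prodList L₂ := by simp [prodList]

theorem prodList_invRev (L : List (Σ i, M i)) : prodList (invRev L) = (prodList L)⁻¹ := by
  induction L with
  | nil => simp [invRev_nil, prodList_nil]
  | cons x L ih =>
    rw [invRev_cons, prodList_append, ih, prodList_singleton, prodList_cons, mul_inv_rev]
    simp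

theorem wordOf_prodList (L : List (Σ i, M i)) (h1 : ∀ l ∈ L, l.2 ≠ 1)
    (h2 : L.Chain' fun a b => a.1 ≠ b.1) : wordOf (M := M) (prodList L) = L := by
  have e : prodList (M := M) L = CoprodI.Word.prod ⟨L, h1, h2⟩ := rfl
  rw [wordOf, e]
  have h : CoprodI.Word.prod (M := M) ⟨L, h1, h2⟩ = CoprodI.Word.equiv.symm ⟨L, h1, h2⟩ := rfl
  rw [h, Equiv.apply_symm_apply]

theorem prodList_wordOf (h : CoprodI M) : prodList (wordOf h) = h := by
  have e : prodList (M := M) (wordOf h) = CoprodI.Word.prod (CoprodI.Word.equiv h) := rfl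
  rw [e]
  exact CoprodI.Word.equiv.symm_apply_apply h

theorem wordOf_ne_one (h : CoprodI M) : ∀ l ∈ wordOf h, l.2 ≠ 1 :=
  (CoprodI.Word.equiv h).ne_one

theorem wordOf_chain (h : CoprodI M) :
    List.Chain' (fun a b => a.1 ≠ b.1) (wordOf h) :=
  (CoprodI.Word.equiv h).chain_ne

theorem wordOf_inv (g : CoprodI M) : wordOf (g⁻¹) = invRev (wordOf g) := by
  conv_lhs => rw [← prodList_wordOf g]
  rw [← prodList_invRev]
  refine wordOf_prodList _ ?_ ?_
  · intro l hl
    rw [invRev, List.mem_reverse, List.mem_map] at hl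
    obtain ⟨x, hx, rfl⟩ := hl
    simpa using wordOf_ne_one g x hx
  · unfold List.Chain'
    rw [invRev, List.isChain_reverse, List.isChain_map]
    exact (wordOf_chain g).imp fun a b hab => by simpa [flip] using Ne.symm hab

/-! ### The decomposition of a product of two reduced words -/

theorem exists_decomp (h₁ h₂ : CoprodI M) :
    ∃ a s b m₁ m₂ m₃ : List (Σ i, M i),
      wordOf h₁ = a ++ m₁ ++ s ∧
      wordOf h₂ = invRev s ++ m₂ ++ b ∧
      wordOf (h₁ * h₂) = a ++ m₃ ++ b ∧
      ((m₁ = [] ∧ m₂ = [] ∧ m₃ = []) ∨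
        ∃ (i : ι) (x y : M i), m₁ = [⟨i, x⟩] ∧ m₂ = [⟨i, y⟩] ∧ m₃ = [⟨i, x * y⟩]) := by
  suffices H : ∀ (n : ℕ) (h₁ h₂ : CoprodI M), (wordOf h₁).length ≤ n →
      ∃ a s b m₁ m₂ m₃ : List (Σ i, M i),
        wordOf h₁ = a ++ m₁ ++ s ∧
        wordOf h₂ = invRev s ++ m₂ ++ b ∧
        wordOf (h₁ * h₂) = a ++ m₃ ++ b ∧
        ((m₁ = [] ∧ m₂ = [] ∧ m₃ = []) ∨
          ∃ (i : ι) (x y : M i), m₁ = [⟨i, x⟩] ∧ m₂ = [⟨i, y⟩] ∧ m₃ = [⟨i, x * y⟩]) by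
    exact H _ h₁ h₂ le_rfl
  intro n
  induction n with
  | zero =>
    intro h₁ h₂ hn
    have hnil : wordOf h₁ = [] := List.eq_nil_of_length_eq_zero (Nat.le_zero.mp hn)
    have h1 : h₁ = 1 := by rw [← prodList_wordOf h₁, hnil]; rfl
    exact ⟨[], [], wordOf h₂, [], [], [], by simp [hnil], by simp [invRev_nil],
      by rw [h1, one_mul]; simp, Or.inl ⟨rfl, rfl, rfl⟩⟩
  | succ n ih =>
    intro h₁ h₂ hn
    rcases hw1 : wordOf h₁ with _ | ⟨⟨j, u⟩, t⟩
    · have h1 : h₁ = 1 := by rw [← prodList_wordOf h₁, hw1]; rfl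
      exact ⟨[], [], wordOf h₂, [], [], [], by simp [hw1], by simp [invRev_nil],
        by rw [h1, one_mul]; simp, Or.inl ⟨rfl, rfl, rfl⟩⟩
    · have hu : u ≠ 1 := wordOf_ne_one h₁ ⟨j, u⟩ (by rw [hw1]; exact List.mem_cons_self)
      have hch : List.Chain' (fun a b => a.1 ≠ b.1) ((⟨j, u⟩ : Σ i, M i) :: t) := by
        rw [← hw1]; exact wordOf_chain h₁
      have htne : ∀ l ∈ t, l.2 ≠ 1 := fun l hl =>
        wordOf_ne_one h₁ l (by rw [hw1]; exact List.mem_cons_of_mem _ hl)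
      have hwt : wordOf (prodList t : CoprodI M) = t := wordOf_prodList t htne hch.tail
      set h₁' := prodList t with hh1'
      have hmul : h₁ = CoprodI.of u * h₁' := by
        conv_lhs => rw [← prodList_wordOf h₁]
        rw [hw1, prodList_cons]
      have hlt : (wordOf h₁').length ≤ n := by
        rw [hwt]
        have hl1 := congrArg List.length hw1
        simp at hl1
        omega
      obtain ⟨a, s, b, m₁, m₂, m₃, e1, e2, e3, hlink⟩ := ih h₁' h₂ hlt
      rw [hwt] at e1
      have hprod3 : h₁' * h₂ = prodList (a ++ m₃ ++ b) := by rw [← e3, prodList_wordOf]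
      have hne3 : ∀ l ∈ a ++ m₃ ++ b, l.2 ≠ 1 := by rw [← e3]; exact wordOf_ne_one _
      have hch3 : List.Chain' (fun a b => a.1 ≠ b.1) (a ++ m₃ ++ b) := by
        rw [← e3]; exact wordOf_chain _
      have hmul2 : h₁ * h₂ = CoprodI.of u * (h₁' * h₂) := by rw [hmul, mul_assoc]
      by_cases ham : a ++ m₁ = []
      · obtain ⟨ha, hm1⟩ := List.append_eq_nil_iff.mp ham
        have hm23 : m₂ = [] ∧ m₃ = [] := by
          rcases hlink with ⟨_, h2', h3'⟩ | ⟨i, x, y, hx, _, _⟩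
          · exact ⟨h2', h3'⟩
          · rw [hm1] at hx; cases hx
        obtain ⟨hm2, hm3⟩ := hm23
        subst ha hm1 hm2 hm3
        simp only [List.nil_append, List.append_nil] at e1 e2 e3 hprod3 hne3 hch3
        rcases hb : b with _ | ⟨⟨jb, v⟩, b₀⟩
        · -- C1 : everything cancels
          have hone : h₁' * h₂ = 1 := by rw [← prodList_wordOf (h₁' * h₂), e3, hb]; rfl
          have hprod : h₁ * h₂ = CoprodI.of u := by rw [hmul2, hone, mul_one]
          have hw3 : wordOf (h₁ * h₂) = [⟨j, u⟩] := by
            rw [hprod, show (CoprodI.of u : CoprodI M) = prodList [⟨j, u⟩] from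
              (prodList_singleton (⟨j, u⟩ : Σ i, M i)).symm]
            exact wordOf_prodList _ (by simpa using hu) (List.isChain_singleton _)
          refine ⟨[⟨j, u⟩], s, [], [], [], [], ?_, ?_, ?_, Or.inl ⟨rfl, rfl, rfl⟩⟩
          · rw [e1]; simp
          · rw [e2, hb]; simp
          · rw [hw3]; simp
        · have hv : v ≠ 1 := hne3 ⟨jb, v⟩ (by rw [hb]; exact List.mem_cons_self)
          have hchb : List.Chain' (fun a b => a.1 ≠ b.1) ((⟨jb, v⟩ : Σ i, M i) :: b₀) := by
            rw [← hb]; exact hch3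
          by_cases hj : j = jb
          · subst hj
            by_cases huv : u * v = 1
            · -- C2c : the letters cancel
              have hveq : v = u⁻¹ := (inv_eq_of_mul_eq_one_right huv).symm
              have hprod : h₁ * h₂ = prodList b₀ := by
                rw [hmul2, hprod3, hb, prodList_cons, ← mul_assoc, ← map_mul, huv, map_one,
                  one_mul]
              have hw3 : wordOf (h₁ * h₂) = b₀ := by
                rw [hprod]
                exact wordOf_prodList _
                  (fun l hl => hne3 l (by rw [hb]; exact List.mem_cons_of_mem _ hl)) hchb.tail
              refine ⟨[], ⟨j, u⟩ :: s, b₀, [], [], [], ?_, ?_, ?_, Or.inl ⟨rfl, rfl, rfl⟩⟩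
              · rw [e1]; simp
              · rw [e2, hb, invRev_cons, hveq]; simp
              · rw [hw3]; simp
            · -- C2b : the letters merge
              have hprod : h₁ * h₂ = prodList (⟨j, u * v⟩ :: b₀) := by
                rw [hmul2, hprod3, hb, prodList_cons, prodList_cons, ← mul_assoc, ← map_mul]
              have hw3 : wordOf (h₁ * h₂) = ⟨j, u * v⟩ :: b₀ := by
                rw [hprod]
                refine wordOf_prodList _ ?_ ?_
                · intro l hl
                  rcases List.mem_cons.mp hl with rfl | hl'
                  · exact huv
                  · exact hne3 l (by rw [hb]; exact List.mem_cons_of_mem _ hl')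
                · unfold List.Chain'
                  rw [List.isChain_cons]
                  exact ⟨fun y hy => (List.isChain_cons.mp hchb).1 y hy, hchb.tail⟩
              refine ⟨[], s, b₀, [⟨j, u⟩], [⟨j, v⟩], [⟨j, u * v⟩], ?_, ?_, ?_,
                Or.inr ⟨j, u, v, rfl, rfl, rfl⟩⟩
              · rw [e1]; simp
              · rw [e2, hb]; simp
              · rw [hw3]; simp
          · -- C2a : no interaction
            have hprod : h₁ * h₂ = prodList (⟨j, u⟩ :: b) := by
              rw [hmul2, hprod3, prodList_cons]
            have hw3 : wordOf (h₁ * h₂) = ⟨j, u⟩ :: b := by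
              rw [hprod]
              refine wordOf_prodList _ ?_ ?_
              · intro l hl
                rcases List.mem_cons.mp hl with rfl | hl'
                · exact hu
                · exact hne3 l hl'
              · unfold List.Chain'
                rw [hb, List.isChain_cons_cons]
                exact ⟨hj, by rw [← hb]; exact hch3⟩
            refine ⟨[⟨j, u⟩], s, b, [], [], [], ?_, ?_, ?_, Or.inl ⟨rfl, rfl, rfl⟩⟩
            · rw [e1]; simp
            · rw [e2]; simp
            · rw [hw3]; simp
      · -- case A : the new letter does not reach the cancellation zone
        obtain ⟨c, r, hcr⟩ := List.exists_cons_of_ne_nil ham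
        have ht' : t = c :: (r ++ s) := by rw [e1, hcr]; rfl
        have hjc : j ≠ c.1 := by
          have hch' := hch
          unfold List.Chain' at hch'
          rw [ht', List.isChain_cons_cons] at hch'
          exact hch'.1
        obtain ⟨c', r', hc', hcc⟩ : ∃ c' r', a ++ m₃ ++ b = c' :: r' ∧ c'.1 = c.1 := by
          rcases ha : a with _ | ⟨c₀, a₀⟩
          · rcases hlink with ⟨hm1, _, _⟩ | ⟨i, x, y, hx, hy2, hz⟩
            · rw [ha, hm1] at hcr; cases hcr
            · rw [ha, hx] at hcr
              have hc : c = ⟨i, x⟩ := by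
                have := congrArg (fun l => l.head?) hcr
                simpa using this.symm
              refine ⟨⟨i, x * y⟩, b, by rw [hz]; simp, by rw [hc]⟩
          · have hcr' : c₀ :: (a₀ ++ m₁) = c :: r := by rw [← hcr, ha]; rfl
            have hc : c₀ = c := (List.cons_eq_cons.mp hcr').1
            exact ⟨c₀, a₀ ++ m₃ ++ b, by simp, by rw [hc]⟩
        have hprod : h₁ * h₂ = prodList (⟨j, u⟩ :: (a ++ m₃ ++ b)) := by
          rw [hmul2, hprod3, prodList_cons]
        have hw3 : wordOf (h₁ * h₂) = ⟨j, u⟩ :: (a ++ m₃ ++ b) := by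
          rw [hprod]
          refine wordOf_prodList _ ?_ ?_
          · intro l hl
            rcases List.mem_cons.mp hl with rfl | hl'
            · exact hu
            · exact hne3 l hl'
          · unfold List.Chain'
            rw [hc', List.isChain_cons_cons]
            refine ⟨by rw [hcc]; exact hjc, by rw [← hc']; exact hch3⟩
        refine ⟨⟨j, u⟩ :: a, s, b, m₁, m₂, m₃, ?_, e2, ?_, hlink⟩
        · rw [e1]; simp
        · rw [hw3]; simp

/-- The Brooks counting function of a cyclically reduced, non-self-overlapping word of
length at least two is a quasimorphism of defect at most 3. -/
theorem brooks_defect_le_three (g : CoprodI M)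
    (hlen : 2 ≤ (wordOf g).length)
    (hcyc : CyclicallyReduced (wordOf g))
    (hso : ¬ SelfOverlapping (wordOf g)) :
    ∀ h₁ h₂ : CoprodI M, |brooks g h₁ + brooks g h₂ - brooks g (h₁ * h₂)| ≤ 3 := by
  intro h₁ h₂
  have hp : wordOf g ≠ [] := by
    intro h; rw [h] at hlen; simp at hlen
  have hq : wordOf g⁻¹ = invRev (wordOf g) := wordOf_inv g
  have hqne : invRev (wordOf g) ≠ [] := invRev_ne_nil hp
  have hsoq : ¬ SelfOverlapping (invRev (wordOf g)) := fun h => by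
    have h2 := so_invRev h
    rw [invRev_invRev] at h2
    exact hso h2
  obtain ⟨a, s, b, m₁, m₂, m₃, e1, e2, e3, hlink⟩ := exists_decomp h₁ h₂
  have hm : m₁.length ≤ 1 ∧ m₂.length ≤ 1 ∧ m₃.length ≤ 1 := by
    rcases hlink with ⟨r1, r2, r3⟩ | ⟨i, x, y, r1, r2, r3⟩ <;> simp [r1, r2, r3]
  obtain ⟨hm1, hm2, hm3⟩ := hm
  have S1p := countOcc_split (wordOf g) a m₁ s hp hm1
  have S1q := countOcc_split (invRev (wordOf g)) a m₁ s hqne hm1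
  have S2p := countOcc_split (wordOf g) (invRev s) m₂ b hp hm2
  have S2q := countOcc_split (invRev (wordOf g)) (invRev s) m₂ b hqne hm2
  have S3p := countOcc_split (wordOf g) a m₃ b hp hm3
  have S3q := countOcc_split (invRev (wordOf g)) a m₃ b hqne hm3
  have X1p : xcnt (wordOf g) (a ++ m₁ ++ s) a.length (a.length + m₁.length) ≤ 1 :=
    xcnt_le_one _ (by omega) hso
  have X1q : xcnt (invRev (wordOf g)) (a ++ m₁ ++ s) a.length (a.length + m₁.length) ≤ 1 :=
    xcnt_le_one _ (by omega) hsoq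
  have X2p : xcnt (wordOf g) (invRev s ++ m₂ ++ b) (invRev s).length
      ((invRev s).length + m₂.length) ≤ 1 := xcnt_le_one _ (by omega) hso
  have X2q : xcnt (invRev (wordOf g)) (invRev s ++ m₂ ++ b) (invRev s).length
      ((invRev s).length + m₂.length) ≤ 1 := xcnt_le_one _ (by omega) hsoq
  have X3p : xcnt (wordOf g) (a ++ m₃ ++ b) a.length (a.length + m₃.length) ≤ 1 :=
    xcnt_le_one _ (by omega) hso
  have X3q : xcnt (invRev (wordOf g)) (a ++ m₃ ++ b) a.length (a.length + m₃.length) ≤ 1 :=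
    xcnt_le_one _ (by omega) hsoq
  have I1 : countOcc (wordOf g) (invRev s) = countOcc (invRev (wordOf g)) s := by
    rw [countOcc_invRev (wordOf g) hp (invRev s), invRev_invRev]
  have I2 : countOcc (invRev (wordOf g)) (invRev s) = countOcc (wordOf g) s :=
    (countOcc_invRev (wordOf g) hp s).symm
  simp only [brooks, e1, e2, e3, hq]
  rw [S1p, S1q, S2p, S2q, S3p, S3q, I1, I2]
  rw [abs_le]
  constructor <;> push_cast <;> omega
end

section
/- In a free group (or free product of cyclic groups with lexicographic order on reduced words), every element g that is not a proper power is conjugate to an element g' whose reduced word representative is cyclically reduced and not self-overlapping. -/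
open Monoid

variable {ι : Type*} [DecidableEq ι] {M : ι → Type*} [∀ i, Group (M i)]
  [∀ i, DecidableEq (M i)] [∀ i, IsCyclic (M i)]

/-! ### Auxiliary machinery -/

/-- A list is `Allowed` if it could be the list of letters of a reduced word. -/
def Allowed (l : List (Σ i, M i)) : Prop :=
  (∀ x ∈ l, x.2 ≠ 1) ∧ l.Chain' (fun a b => a.1 ≠ b.1)

/-- Product of the letters of a list in the free product. -/
noncomputable def listProd (l : List (Σ i, M i)) : CoprodI M :=
  (l.map fun x => CoprodI.of x.2).prod

lemma listProd_append (a b : List (Σ i, M i)) :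
    listProd (a ++ b) = listProd a * listProd b := by
  simp [listProd]

lemma listProd_cons (x : (Σ i, M i)) (l : List (Σ i, M i)) :
    listProd (x :: l) = CoprodI.of x.2 * listProd l := by
  simp [listProd]

lemma wordOf_listProd {l : List (Σ i, M i)} (h : Allowed l) : wordOf (listProd l) = l := by
  have h1 : listProd l = CoprodI.Word.equiv.symm ⟨l, h.1, h.2⟩ := rfl
  rw [wordOf, h1, Equiv.apply_symm_apply]

lemma listProd_wordOf (g : CoprodI M) : listProd (wordOf g) = g := by
  have : listProd (wordOf g) = CoprodI.Word.equiv.symm (CoprodI.Word.equiv g) := rfl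
  rw [this, Equiv.symm_apply_apply]

lemma allowed_wordOf (g : CoprodI M) : Allowed (wordOf g) :=
  ⟨(CoprodI.Word.equiv g).ne_one, (CoprodI.Word.equiv g).chain_ne⟩

lemma not_selfOverlapping_short {l : List (Σ i, M i)} (h : l.length ≤ 1) :
    ¬ SelfOverlapping l := by
  rintro ⟨v, u, hv, rfl⟩
  have := List.length_pos_iff.2 hv
  simp only [List.length_append] at h
  omega

lemma flat_add {α : Type*} (a b : ℕ) (z : List α) :
    (List.replicate (a + b) z).flatten =
      (List.replicate a z).flatten ++ (List.replicate b z).flatten := by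
  rw [List.replicate_add, List.flatten_append]

lemma listProd_flat (k : ℕ) (z : List (Σ i, M i)) :
    listProd (List.replicate k z).flatten = (listProd z) ^ k := by
  induction k with
  | zero => simp [listProd]
  | succ n ih =>
    rw [List.replicate_succ, List.flatten_cons, listProd_append, ih, pow_succ']

lemma comm_append {α : Type*} : ∀ (n : ℕ) (u v : List α), u.length + v.length ≤ n →
    u ++ v = v ++ u → ∃ (z : List α) (a b : ℕ),
      u = (List.replicate a z).flatten ∧ v = (List.replicate b z).flatten := by
  intro n
  induction n with
  | zero =>
    intro u v hn _
    have hu : u = [] := by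
      have := List.length_eq_zero_iff.mp (by omega : u.length = 0); exact this
    have hv : v = [] := by
      have := List.length_eq_zero_iff.mp (by omega : v.length = 0); exact this
    exact ⟨[], 0, 0, by simp [hu], by simp [hv]⟩
  | succ n ih =>
    intro u v hn huv
    rcases eq_or_ne u [] with rfl | hu
    · exact ⟨v, 0, 1, by simp, by simp⟩
    rcases eq_or_ne v [] with rfl | hv
    · exact ⟨u, 1, 0, by simp, by simp⟩
    rcases le_or_gt u.length v.length with h | h
    · -- u is a prefix of v
      have hupre : u = v.take u.length := by
        have h1 : (u ++ v).take u.length = u := List.take_left' rfl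
        have h2 : (v ++ u).take u.length = v.take u.length := by
          rw [List.take_append]
          have : u.length - v.length = 0 := by omega
          simp [this]
        rw [huv] at h1; rw [h2] at h1; exact h1.symm
      set w := v.drop u.length with hw
      have hvuw : v = u ++ w := by
        conv_lhs => rw [← List.take_append_drop u.length v]
        rw [← hupre]
      have hcomm2 : u ++ w = w ++ u := by
        have h3 : u ++ (u ++ w) = (u ++ w) ++ u := by rw [← hvuw, huv, hvuw]
        rw [List.append_assoc] at h3
        exact List.append_cancel_left h3
      have hlen : u.length + w.length ≤ n := by
        have h1 : u.length + w.length = v.length := by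
          rw [hw, List.length_drop]
          omega
        have h2 : 0 < u.length := List.length_pos_iff.2 hu
        omega
      obtain ⟨z, a, b, hu', hw'⟩ := ih u w hlen hcomm2
      exact ⟨z, a, a + b, hu', by rw [hvuw, flat_add, hu', hw']⟩
    · -- v is a prefix of u
      have hvpre : v = u.take v.length := by
        have h1 : (v ++ u).take v.length = v := List.take_left' rfl
        have h2 : (u ++ v).take v.length = u.take v.length := by
          rw [List.take_append]
          have : v.length - u.length = 0 := by omega
          simp [this]
        rw [← huv] at h1; rw [h2] at h1; exact h1.symm
      set w := u.drop v.length with hw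
      have huvw : u = v ++ w := by
        conv_lhs => rw [← List.take_append_drop v.length u]
        rw [← hvpre]
      have hcomm2 : v ++ w = w ++ v := by
        have h3 : v ++ (v ++ w) = (v ++ w) ++ v := by rw [← huvw, ← huv, huvw]
        rw [List.append_assoc] at h3
        exact List.append_cancel_left h3
      have hlen : v.length + w.length ≤ n := by
        have h1 : v.length + w.length = u.length := by
          rw [hw, List.length_drop]
          omega
        have h2 : 0 < v.length := List.length_pos_iff.2 hv
        omega
      obtain ⟨z, b, a, hv', hw'⟩ := ih v w hlen hcomm2
      exact ⟨z, b + a, b, by rw [huvw, flat_add, hv', hw'], hv'⟩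

lemma lex_append_of_length_eq {α : Type*} {r : α → α → Prop} :
    ∀ {a b : List α}, List.Lex r a b → a.length = b.length →
      ∀ (s t : List α), List.Lex r (a ++ s) (b ++ t) := by
  intro a b h
  induction h with
  | nil => intro hl; simp at hl
  | @rel a l₁ b l₂ h => intro _ s t; exact List.Lex.rel h
  | @cons a l₁ l₂ h ih =>
    intro hl s t
    exact List.Lex.cons (ih (by simpa using hl) s t)

/-- Any element is conjugate to one with cyclically reduced word. -/
lemma exists_conj_cyclically_reduced (g : CoprodI M) :
    ∃ g₀ : CoprodI M, IsConj g g₀ ∧ CyclicallyReduced (wordOf g₀) := by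
  generalize hn : (wordOf g).length = n
  induction n using Nat.strong_induction_on generalizing g with
  | _ n ih =>
  by_cases hc : CyclicallyReduced (wordOf g)
  · exact ⟨g, IsConj.refl g, hc⟩
  rw [CyclicallyReduced] at hc
  push_neg at hc
  obtain ⟨h2, x, hx, y, hy, hxy⟩ := hc
  have hlne : wordOf g ≠ [] := by
    intro h; rw [h] at h2; simp at h2
  have htne : (wordOf g).tail ≠ [] := by
    intro h
    have := congrArg List.length h
    simp [List.length_tail] at this
    omega
  obtain ⟨mid, a, b, hsplit⟩ : ∃ mid a b, wordOf g = a :: (mid ++ [b]) :=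
    ⟨(wordOf g).tail.dropLast, (wordOf g).head hlne, (wordOf g).tail.getLast htne, by
      rw [List.dropLast_append_getLast htne, List.cons_head_tail]⟩
  have hxa : a = x := by
    rw [hsplit] at hx
    simp only [List.head?_cons, Option.mem_def, Option.some.injEq] at hx
    exact hx
  have hyb : b = y := by
    have h : (wordOf g).getLast? = some b := by
      rw [hsplit, ← List.cons_append, List.getLast?_concat]
    rw [h] at hy
    simp only [Option.mem_def, Option.some.injEq] at hy
    exact hy
  subst hxa; subst hyb
  obtain ⟨i, a2⟩ := a
  obtain ⟨j, b2⟩ := b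
  simp only at hxy
  subst hxy
  -- g as a product
  have hall := allowed_wordOf g
  obtain ⟨hne1, hch⟩ := hall
  rw [hsplit] at hne1 hch
  have hg : g = CoprodI.of a2 * (listProd mid * CoprodI.of b2) := by
    conv_lhs => rw [← listProd_wordOf g, hsplit]
    rw [listProd_cons, listProd_append]
    simp [listProd]
  set c : CoprodI M := CoprodI.of a2 with hc
  set g₀ : CoprodI M := c⁻¹ * g * c with hg₀
  have hconj : IsConj g g₀ := isConj_iff.2 ⟨c⁻¹, by rw [hg₀]; group⟩
  have hg0 : g₀ = listProd mid * CoprodI.of (b2 * a2) := by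
    rw [hg₀, hg, map_mul, hc]; group
  have hlen : (wordOf g).length = mid.length + 2 := by rw [hsplit]; simp
  by_cases hba : b2 * a2 = 1
  · -- letters cancel
    have hg0' : g₀ = listProd mid := by rw [hg0, hba, map_one, mul_one]
    have hallmid : Allowed mid := by
      constructor
      · intro x hxm; exact hne1 x (by simp [hxm])
      · exact hch.tail.infix ⟨[], [⟨i, b2⟩], by simp⟩
    have hw : wordOf g₀ = mid := by rw [hg0', wordOf_listProd hallmid]
    obtain ⟨g₁, hc1, hcr1⟩ := ih mid.length (by omega) g₀ (by rw [hw])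
    exact ⟨g₁, hconj.trans hc1, hcr1⟩
  · -- letters merge
    have hallm : Allowed (mid ++ [⟨i, b2 * a2⟩]) := by
      constructor
      · intro x hxm
        rcases List.mem_append.1 hxm with h | h
        · exact hne1 x (by simp [h])
        · simp at h; subst h; exact hba
      · have h1 : List.Chain' (fun a b : (Σ i, M i) => a.1 ≠ b.1) (mid ++ [⟨i, b2⟩]) :=
          hch.tail
        simp only [List.Chain'] at h1 ⊢
        rw [← List.isChain_map Sigma.fst] at h1 ⊢
        simpa using h1
    have hw : wordOf g₀ = mid ++ [⟨i, b2 * a2⟩] := by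
      have hsing : CoprodI.of (b2 * a2) = listProd [⟨i, b2 * a2⟩] := by simp [listProd]
      rw [hg0, hsing, ← listProd_append, wordOf_listProd hallm]
    obtain ⟨g₁, hc1, hcr1⟩ := ih (mid.length + 1) (by omega) g₀ (by rw [hw]; simp)
    exact ⟨g₁, hconj.trans hc1, hcr1⟩

/-- Rotations of allowed cyclically reduced words are allowed and cyclically reduced. -/
lemma rotate_allowed {l : List (Σ i, M i)} (h1 : Allowed l) (h2 : CyclicallyReduced l)
    (n : ℕ) : Allowed (l.rotate n) ∧ CyclicallyReduced (l.rotate n) := by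
  rcases eq_or_ne l [] with rfl | hl
  · simpa [List.rotate_nil] using ⟨h1, h2⟩
  have hlpos : 0 < l.length := List.length_pos_iff.2 hl
  rw [← List.rotate_mod]
  set m := n % l.length with hm
  have hmlt : m < l.length := Nat.mod_lt _ hlpos
  rw [List.rotate_eq_drop_append_take hmlt.le]
  rcases Nat.eq_zero_or_pos m with hm0 | hmpos
  · simp only [hm0, List.drop_zero, List.take_zero, List.append_nil]
    exact ⟨h1, h2⟩
  have hlen2 : 2 ≤ l.length := by omega
  constructor
  · constructor
    · intro x hx
      rcases List.mem_append.1 hx with h | h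
      · exact h1.1 x (List.mem_of_mem_drop h)
      · exact h1.1 x (List.mem_of_mem_take h)
    · simp only [List.Chain']
      rw [List.isChain_append]
      refine ⟨h1.2.suffix (List.drop_suffix _ _), h1.2.prefix (List.take_prefix _ _), ?_⟩
      intro x hx y hy
      rw [List.getLast?_drop, if_neg (by omega)] at hx
      rw [List.head?_take, if_neg (by omega)] at hy
      exact (h2 hlen2 y hy x hx).symm
  · intro _ x hx y hy
    rw [List.head?_append, List.head?_drop] at hx
    rw [List.getLast?_append, List.getLast?_take, if_neg (by omega)] at hy
    have hx' : l[m] = x := by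
      rw [List.getElem?_eq_getElem hmlt] at hx
      simpa [Option.or] using hx
    have hm1lt : m - 1 < l.length := by omega
    have hy' : l[m - 1] = y := by
      rw [List.getElem?_eq_getElem hm1lt] at hy
      simpa [Option.or] using hy
    subst hx'; subst hy'
    have hchain := List.isChain_iff_getElem.1 h1.2 (m - 1) (by omega)
    have hidx : m - 1 + 1 = m := by omega
    simp only [List.get_eq_getElem, hidx] at hchain
    exact fun h => hchain h.symm

lemma isConj_listProd_rotate (l : List (Σ i, M i)) (n : ℕ) :
    IsConj (listProd l) (listProd (l.rotate n)) := by
  rcases eq_or_ne l [] with rfl | hl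
  · rw [List.rotate_nil]
  have hlpos : 0 < l.length := List.length_pos_iff.2 hl
  rw [← List.rotate_mod]
  set m := n % l.length with hm
  have hmlt : m < l.length := Nat.mod_lt _ hlpos
  rw [List.rotate_eq_drop_append_take hmlt.le, listProd_append]
  have hl' : listProd l = listProd (l.take m) * listProd (l.drop m) := by
    rw [← listProd_append, List.take_append_drop]
  rw [isConj_iff]
  exact ⟨(listProd (l.take m))⁻¹, by rw [hl']; group⟩

/-- Every element of a free product of cyclic groups that is not a proper power is conjugate
to an element whose reduced word is cyclically reduced and not self-overlapping. -/
theorem exists_conj_cyclically_reduced_not_selfOverlapping (g : CoprodI M)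
    (hg : ¬ ∃ (k : ℕ) (h : CoprodI M), 2 ≤ k ∧ g = h ^ k) :
    ∃ g' : CoprodI M, IsConj g g' ∧ CyclicallyReduced (wordOf g') ∧
      ¬ SelfOverlapping (wordOf g') := by
  obtain ⟨g₀, hconj₀, hcr₀⟩ := exists_conj_cyclically_reduced g
  set l := wordOf g₀ with hl
  have hall := allowed_wordOf g₀
  by_cases hlen : l.length ≤ 1
  · exact ⟨g₀, hconj₀, hcr₀, not_selfOverlapping_short hlen⟩
  push_neg at hlen
  have hlpos : 0 < l.length := by omega
  letI : LinearOrder ((i : ι) × M i) := IsWellOrder.linearOrder WellOrderingRel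
  set S : Finset (List (Σ i, M i)) := (Finset.range l.length).image (fun n => l.rotate n)
    with hS
  have hSne : S.Nonempty :=
    ⟨l.rotate 0, Finset.mem_image.2 ⟨0, Finset.mem_range.2 hlpos, rfl⟩⟩
  obtain ⟨n₀, -, hw⟩ := Finset.mem_image.1 (S.min'_mem hSne)
  set w := S.min' hSne with hwdef
  have hmin : ∀ m : ℕ, ¬ List.Lex (· < ·) (l.rotate m) w := by
    intro m hlt
    have hmem : l.rotate m ∈ S := by
      rw [← List.rotate_mod]
      exact Finset.mem_image.2 ⟨m % l.length, Finset.mem_range.2 (Nat.mod_lt _ hlpos), rfl⟩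
    exact absurd (lt_of_lt_of_le (show l.rotate m < w from hlt) (S.min'_le _ hmem))
      (lt_irrefl _)
  obtain ⟨hallw, hcrw⟩ : Allowed w ∧ CyclicallyReduced w := by
    rw [← hw]; exact rotate_allowed hall hcr₀ n₀
  set g' := listProd w with hg'
  have hwg' : wordOf g' = w := wordOf_listProd hallw
  have hconj' : IsConj g g' := by
    refine hconj₀.trans ?_
    have := isConj_listProd_rotate l n₀
    rwa [listProd_wordOf, hw] at this
  have hwlen : w.length = l.length := by rw [← hw, List.length_rotate]
  by_cases hso : SelfOverlapping w
  · exfalso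
    obtain ⟨v, u, hv, hwvu⟩ := hso
    by_cases hcomm : u ++ v = v ++ u
    · -- w is a proper power, hence g is a proper power: contradiction
      obtain ⟨z, a, b, hu, hv'⟩ :=
        comm_append (u.length + v.length) u v le_rfl hcomm
      have hb : 1 ≤ b := by
        rcases Nat.eq_zero_or_pos b with h0 | h; · simp [h0] at hv'; exact absurd hv' hv
        exact h
      set k := b + (a + b) with hk
      have hw' : w = (List.replicate k z).flatten := by
        rw [hwvu, hk, flat_add, flat_add, ← hu, ← hv', List.append_assoc]
      have hgk : g' = (listProd z) ^ k := by rw [hg', hw', listProd_flat]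
      obtain ⟨c, hc⟩ := isConj_iff.1 hconj'
      have : g = ((MulAut.conj c⁻¹) (listProd z)) ^ k := by
        rw [← map_pow, ← hgk, ← hc]
        simp [MulAut.conj_apply, mul_assoc]
      exact hg ⟨k, _, by omega, this⟩
    · -- lexicographic contradiction
      rcases trichotomous_of (List.Lex (· < ·)) (u ++ v) (v ++ u) with h | h | h
      · -- rotate by |v|: u ++ v ++ v beats w
        refine hmin (n₀ + v.length) ?_
        rw [← List.rotate_rotate, hw]
        have hrot : w.rotate v.length = (u ++ v) ++ v := by
          rw [hwvu, List.append_assoc,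
            List.rotate_eq_drop_append_take (by simp only [List.length_append]; omega),
            List.drop_left' rfl, List.take_left' rfl]
        rw [hrot]
        have : w = (v ++ u) ++ v := by rw [hwvu]
        rw [this]
        exact lex_append_of_length_eq h (by simp [Nat.add_comm]) v v
      · exact hcomm h
      · -- rotate by |v| + |u| : v ++ v ++ u beats w
        refine hmin (n₀ + (v.length + u.length)) ?_
        rw [← List.rotate_rotate, hw]
        have hrot : w.rotate (v.length + u.length) = v ++ (v ++ u) := by
          rw [hwvu, List.rotate_eq_drop_append_take
              (by simp only [List.length_append]; omega)]
          have h1 : (v ++ u ++ v).drop (v.length + u.length) = v :=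
            List.drop_left' (by simp)
          have h2 : (v ++ u ++ v).take (v.length + u.length) = v ++ u :=
            List.take_left' (by simp)
          rw [h1, h2]
        rw [hrot, hwvu, List.append_assoc]
        exact List.Lex.append_left _ h v
  · exact ⟨g', hconj', by rwa [hwg'], by rwa [hwg']⟩
end

section
/- Let G be a free product of cyclic groups. If g ∈ G is not conjugate into any free factor, then either scl_G(g) ≥ 1/12 or scl_G(g) = 0, and the latter occurs exactly when g is conjugate to g^{-1}. -/
open Monoid
open scoped ENNReal
open scoped commutatorElement

section scl

variable {G : Type*} [Group G]

/-- The set of `n` such that `g` is a product of `n` commutators. -/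
def clSet (g : G) : Set ℕ :=
  {n | ∃ f : Fin n → G × G, g = (List.ofFn fun i => ⁅(f i).1, (f i).2⁆).prod}

/-- Commutator length, valued in `ℝ≥0∞`; it is `⊤` if `g` is not a product of commutators. -/
noncomputable def clE (g : G) : ℝ≥0∞ :=
  sInf ((fun n : ℕ => (n : ℝ≥0∞)) '' clSet g)

/-- Stable commutator length `scl_G(g) = lim_n cl(g^n)/n`, equivalently the infimum of
`cl(g^n)/n`. -/
noncomputable def sclE (g : G) : ℝ≥0∞ :=
  ⨅ n : ℕ+, clE (g ^ (n : ℕ)) / ((n : ℕ) : ℝ≥0∞)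

end scl


namespace SclGap
open List

variable {α : Type*}

/-- n-fold concatenation of a list. -/
def wpow (n : ℕ) (w : List α) : List α := (List.replicate n w).flatten

@[simp] lemma wpow_zero (w : List α) : wpow 0 w = [] := rfl

@[simp] lemma wpow_succ (n : ℕ) (w : List α) : wpow (n + 1) w = w ++ wpow n w := rfl

lemma wpow_add (m n : ℕ) (w : List α) : wpow (m + n) w = wpow m w ++ wpow n w := by
  induction m with
  | zero => simp
  | succ m ih => rw [Nat.succ_add, wpow_succ, wpow_succ, ih, List.append_assoc]

lemma wpow_succ' (n : ℕ) (w : List α) : wpow (n + 1) w = wpow n w ++ w := by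
  rw [wpow_add n 1]; simp [wpow]

@[simp] lemma length_wpow (n : ℕ) (w : List α) : (wpow n w).length = n * w.length := by
  induction n with
  | zero => simp
  | succ n ih => rw [wpow_succ]; simp [ih]; ring

lemma wpow_wpow (m n : ℕ) (w : List α) : wpow m (wpow n w) = wpow (m * n) w := by
  induction m with
  | zero => simp
  | succ m ih => rw [wpow_succ, ih, Nat.succ_mul, Nat.add_comm, wpow_add]

lemma wpow_one (w : List α) : wpow 1 w = w := by simp

/-- rotation of a list by d -/
def rot (d : ℕ) (w : List α) : List α := w.drop d ++ w.take d

@[simp] lemma rot_zero (w : List α) : rot 0 w = w := by simp [rot]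

@[simp] lemma length_rot (d : ℕ) (w : List α) : (rot d w).length = w.length := by
  simp [rot]; omega

lemma rot_length (w : List α) : rot w.length w = w := by simp [rot]

/-- commuting lists have a common root -/
lemma comm_append : ∀ {x y : List α}, x ++ y = y ++ x →
    ∃ z i j, x = wpow i z ∧ y = wpow j z := by
  suffices H : ∀ N, ∀ (x y : List α), x.length + y.length ≤ N → x.length ≤ y.length →
      x ++ y = y ++ x → ∃ z i j, x = wpow i z ∧ y = wpow j z by
    intro x y h
    rcases le_total x.length y.length with hle | hle
    · exact H (x.length + y.length) x y le_rfl hle h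
    · obtain ⟨z, i, j, h1, h2⟩ := H (y.length + x.length) y x le_rfl hle h.symm
      exact ⟨z, j, i, h2, h1⟩
  intro N
  induction N with
  | zero =>
    intro x y hN _ _
    have hx : x = [] := by
      have := List.length_eq_zero_iff.mp (by omega : x.length = 0); exact this
    have hy : y = [] := List.length_eq_zero_iff.mp (by omega)
    exact ⟨[], 0, 0, by simp [hx], by simp [hy]⟩
  | succ N ih =>
    intro x y hN hle h
    rcases eq_or_ne x [] with rfl | hx
    · exact ⟨y, 0, 1, rfl, by simp [wpow]⟩
    · -- x is a prefix of y
      have hxlen : 0 < x.length := List.length_pos_iff.mpr hx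
      have hpre : y.take x.length = x := by
        have h2 : (y ++ x).take x.length = y.take x.length :=
          List.take_append_of_le_length hle
        calc y.take x.length = (y ++ x).take x.length := h2.symm
          _ = (x ++ y).take x.length := by rw [← h]
          _ = x := by simp
      set y' := y.drop x.length with hy'
      have hy : y = x ++ y' := by rw [← hpre, hy', List.take_append_drop]
      have hcomm : x ++ y' = y' ++ x := by
        have : x ++ (x ++ y') = (x ++ y') ++ x := by rw [← hy, h]
        rw [List.append_assoc] at this
        exact List.append_cancel_left this
      rcases le_total x.length y'.length with hle' | hle'
      · obtain ⟨z, i, j, h1, h2⟩ := ih x y' (by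
          have : y'.length = y.length - x.length := by simp [hy']
          omega) hle' hcomm
        exact ⟨z, i, i + j, h1, by rw [hy, h1, h2, ← wpow_add]⟩
      · obtain ⟨z, i, j, h1, h2⟩ := ih y' x (by
          have : y'.length = y.length - x.length := by simp [hy']
          omega) hle' hcomm.symm
        exact ⟨z, j, j + i, h2, by rw [hy, h1, h2, ← wpow_add]⟩

lemma ne_nil_of_wpow {z : List α} {j : ℕ} (h : wpow j z ≠ []) : z ≠ [] := by
  rintro rfl
  exact h (by induction j with | zero => rfl | succ j ih => simpa [wpow_succ] using ih)

/-- a nontrivially self-rotation-fixed list is a proper power -/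
lemma rot_eq_self_power {d : ℕ} {w : List α} (hd : 0 < d) (hdl : d < w.length)
    (h : rot d w = w) : ∃ z j, 2 ≤ j ∧ w = wpow j z := by
  have hsplit : w.take d ++ w.drop d = w := List.take_append_drop _ _
  have hcomm : w.drop d ++ w.take d = w.take d ++ w.drop d := by
    rw [hsplit]; exact h
  obtain ⟨z, i, j, h1, h2⟩ := comm_append hcomm
  refine ⟨z, j + i, ?_, by rw [← hsplit, h2, h1, ← wpow_add]⟩
  have hjlen : (w.drop d).length = i * z.length := by rw [h1]; simp
  have hilen : (w.take d).length = j * z.length := by rw [h2]; simp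
  simp only [List.length_drop] at hjlen
  simp only [List.length_take, Nat.min_eq_left (le_of_lt hdl)] at hilen
  have hi : 1 ≤ i := by
    rcases Nat.eq_zero_or_pos i with rfl | h; · omega
    · exact h
  have hj : 1 ≤ j := by
    rcases Nat.eq_zero_or_pos j with rfl | h; · omega
    · exact h
  omega

lemma take_wpow_mul (q j : ℕ) (w : List α) (h : q ≤ j) :
    (wpow j w).take (q * w.length) = wpow q w := by
  have : wpow j w = wpow q w ++ wpow (j - q) w := by
    rw [← wpow_add]; congr 1; omega
  rw [this, List.take_left' (by simp)]

lemma drop_wpow_mul (q j : ℕ) (w : List α) (h : q ≤ j) :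
    (wpow j w).drop (q * w.length) = wpow (j - q) w := by
  have : wpow j w = wpow q w ++ wpow (j - q) w := by
    rw [← wpow_add]; congr 1; omega
  rw [this, List.drop_left' (by simp)]

lemma wpow_rot (r : ℕ) (z : List α) :
    ∀ j, wpow (j + 1) (rot r z) = z.drop r ++ (wpow j z ++ z.take r) := by
  intro j
  induction j with
  | zero => simp [wpow, rot]
  | succ j ih =>
    have hz : wpow (j + 1) z = (z.take r ++ z.drop r) ++ wpow j z := by
      rw [List.take_append_drop]; rfl
    show rot r z ++ wpow (j + 1) (rot r z) = z.drop r ++ (wpow (j + 1) z ++ z.take r)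
    rw [ih, hz]
    show (z.drop r ++ z.take r) ++ _ = _
    simp only [List.append_assoc]

lemma rot_wpow {z : List α} (r q j : ℕ) (hr : r ≤ z.length) (hq : q < j) :
    rot (q * z.length + r) (wpow j z) = wpow j (rot r z) := by
  obtain ⟨t, rfl⟩ : ∃ t, j = t + 1 := ⟨j - 1, by omega⟩
  have hsplit : wpow (t + 1) z = wpow q z ++ wpow (t + 1 - q) z := by
    rw [← wpow_add]; congr 1; omega
  have hB : wpow (t + 1 - q) z = z ++ wpow (t - q) z := by
    have h : t + 1 - q = (t - q) + 1 := by omega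
    rw [h, wpow_succ]
  have hlenA : (wpow q z).length = q * z.length := by simp
  have hdrop : (wpow (t + 1) z).drop (q * z.length + r) = z.drop r ++ wpow (t - q) z := by
    rw [hsplit, ← hlenA, List.drop_length_add_append, hB,
      List.drop_append_of_le_length hr]
  have htake : (wpow (t + 1) z).take (q * z.length + r) = wpow q z ++ z.take r := by
    rw [hsplit, ← hlenA, List.take_length_add_append, hB,
      List.take_append_of_le_length hr]
  rw [rot, hdrop, htake, wpow_rot]
  have h9 : wpow (t - q) z ++ wpow q z = wpow t z := by
    rw [← wpow_add]; congr 1; omega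
  rw [← h9]
  simp [List.append_assoc]

lemma rot_add {w : List α} {d e : ℕ} (hd : d ≤ w.length) (hde : d + e ≤ w.length) :
    rot e (rot d w) = rot (d + e) w := by
  have hy : (w.drop d).length = w.length - d := by simp
  have he : e ≤ (w.drop d).length := by omega
  show (w.drop d ++ w.take d).drop e ++ (w.drop d ++ w.take d).take e = _
  rw [List.drop_append_of_le_length he, List.take_append_of_le_length he]
  show _ = w.drop (d + e) ++ w.take (d + e)
  rw [List.take_add, ← List.drop_drop]
  simp [List.append_assoc]

lemma rot_rot {w : List α} (hw : w ≠ []) {d e : ℕ} (hd : d < w.length) (he : e ≤ w.length) :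
    rot e (rot d w) = rot ((d + e) % w.length) w := by
  have hwpos : 0 < w.length := List.length_pos_iff.mpr hw
  rcases le_or_gt (d + e) w.length with hde | hde
  · rw [rot_add hd.le hde]
    rcases eq_or_lt_of_le hde with heq | hlt
    · rw [heq, rot_length, Nat.mod_self, rot_zero]
    · rw [Nat.mod_eq_of_lt hlt]
  · -- e > w.length - d
    set x := w.take d with hx
    set y := w.drop d with hyy
    have hxl : x.length = d := by simp [hx]; omega
    have hyl : y.length = w.length - d := by simp [hyy]
    set e' := e - (w.length - d) with he'
    have he'd : e' ≤ d := by omega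
    have he'lt : e' < w.length := by omega
    have hmod : (d + e) % w.length = e' := by
      have : d + e = w.length + e' := by omega
      rw [this, Nat.add_mod_left, Nat.mod_eq_of_lt he'lt]
    rw [hmod]
    have hsplit : rot d w = y ++ x := rfl
    have hey : e = y.length + e' := by omega
    rw [hsplit]
    show (y ++ x).drop e ++ (y ++ x).take e = _
    rw [hey, List.drop_length_add_append, List.take_length_add_append]
    have hwxy : w = x ++ y := (List.take_append_drop d w).symm
    show x.drop e' ++ (y ++ x.take e') = w.drop e' ++ w.take e'
    rw [hwxy, List.drop_append_of_le_length (by omega),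
      List.take_append_of_le_length (by omega)]
    simp [List.append_assoc]

/-- `w` has no nonempty proper border -/
def Unbordered (w : List α) : Prop :=
  ∀ b u v : List α, b ≠ [] → u ≠ [] → w = b ++ u → w = v ++ b → False

lemma exists_primitive_root :
    ∀ (W : List α), W ≠ [] →
      ∃ V k, 1 ≤ k ∧ W = wpow k V ∧ V ≠ [] ∧ ∀ z j, 2 ≤ j → V = wpow j z → False := by
  suffices H : ∀ N, ∀ (W : List α), W.length ≤ N → W ≠ [] →
      ∃ V k, 1 ≤ k ∧ W = wpow k V ∧ V ≠ [] ∧ ∀ z j, 2 ≤ j → V = wpow j z → False by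
    intro W hW; exact H W.length W le_rfl hW
  intro N
  induction N with
  | zero => intro W hN hW; exact absurd (List.length_eq_zero_iff.mp (by omega)) hW
  | succ N ih =>
    intro W hN hW
    by_cases hprim : ∀ z j, 2 ≤ j → W = wpow j z → False
    · exact ⟨W, 1, le_rfl, by simp [wpow], hW, hprim⟩
    · push_neg at hprim
      obtain ⟨z, j, hj, hzj, -⟩ := hprim
      have hz : z ≠ [] := by
        intro h; subst h; apply hW
        rw [hzj]
        induction j with
        | zero => rfl
        | succ j ihj => simp [wpow]
      have hzpos : 0 < z.length := List.length_pos_iff.mpr hz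
      have hlen : W.length = j * z.length := by rw [hzj]; simp
      have hzlt : z.length < W.length := by
        rw [hlen]; nlinarith
      obtain ⟨V, k, hk, hzV, hVne, hVprim⟩ := ih z (by omega) hz
      exact ⟨V, j * k, Nat.mul_pos (by omega) hk, by rw [hzj, hzV, wpow_wpow], hVne, hVprim⟩

section Lex

lemma lt_of_append_lt_left [LinearOrder α] :
    ∀ (b u v : List α), b ++ u < b ++ v → u < v := by
  intro b
  induction b with
  | nil => intro u v h; exact h
  | cons a b ih =>
    intro u v h
    have h' : List.Lex (· < ·) (a :: (b ++ u)) (a :: (b ++ v)) := h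
    cases h' with
    | cons h'' => exact ih u v h''
    | rel h'' => exact absurd h'' (lt_irrefl a)

lemma le_of_append_lt [LinearOrder α] :
    ∀ (u v x y : List α), u.length = v.length → u ++ x < v ++ y → u < v ∨ u = v := by
  intro u
  induction u with
  | nil =>
    intro v x y hlen _
    right; exact (List.length_eq_zero_iff.mp hlen.symm).symm
  | cons a u ih =>
    intro v x y hlen h
    cases v with
    | nil => simp at hlen
    | cons b v =>
      have h' : List.Lex (· < ·) (a :: (u ++ x)) (b :: (v ++ y)) := h
      cases h' with
      | rel h'' => left; exact List.Lex.rel h''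
      | cons h'' =>
        rcases ih v x y (by simpa using hlen) h'' with h3 | h3
        · left; exact List.Lex.cons h3
        · right; rw [h3]

end Lex

lemma exists_unbordered_rot (V : List α) (hV : V ≠ [])
    (hprim : ∀ z j, 2 ≤ j → V = wpow j z → False) :
    ∃ d, d < V.length ∧ Unbordered (rot d V) := by
  classical
  letI : LinearOrder α := IsWellOrder.linearOrder WellOrderingRel
  have hVpos : 0 < V.length := List.length_pos_iff.mpr hV
  obtain ⟨d₀, hd₀mem, hmin⟩ := Finset.exists_min_image (Finset.range V.length)
    (fun d => rot d V) ⟨0, Finset.mem_range.mpr hVpos⟩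
  rw [Finset.mem_range] at hd₀mem
  refine ⟨d₀, hd₀mem, ?_⟩
  set L := rot d₀ V with hLdef
  have hLV : L.length = V.length := length_rot _ _
  have hLne : L ≠ [] := by
    intro h; rw [h] at hLV; simp at hLV; omega
  -- recover V from L
  have hVL : V = rot (V.length - d₀) L := by
    rw [hLdef, rot_rot hV hd₀mem (by omega)]
    have : (d₀ + (V.length - d₀)) = V.length := by omega
    rw [this, Nat.mod_self, rot_zero]
  -- L is primitive
  have hprimL : ∀ z j, 2 ≤ j → L = wpow j z → False := by
    intro z j hj hLz
    have hzne : z ≠ [] := by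
      intro h; subst h; apply hLne; rw [hLz]
      induction j with
      | zero => rfl
      | succ j ihj => simp [wpow]
    have hzpos : 0 < z.length := List.length_pos_iff.mpr hzne
    set e := V.length - d₀ with he
    have heL : e ≤ L.length := by omega
    rcases eq_or_lt_of_le heL with heq | hlt
    · apply hprim z j hj
      rw [hVL, heq, rot_length, hLz]
    · have hLlen : L.length = j * z.length := by rw [hLz]; simp
      have hqj : e / z.length < j := by
        rw [Nat.div_lt_iff_lt_mul hzpos]; omega
      have hqr : e = (e / z.length) * z.length + e % z.length := by
        rw [Nat.mul_comm]; exact (Nat.div_add_mod e z.length).symm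
      apply hprim (rot (e % z.length) z) j hj
      conv_lhs => rw [hVL, hLz, hqr]
      exact rot_wpow _ _ _ (Nat.mod_lt _ hzpos).le hqj
  -- minimality over rotations of L
  have hminL : ∀ e, e ≤ L.length → L ≤ rot e L := by
    intro e heL
    have h1 : rot e L = rot ((d₀ + e) % V.length) V := by
      rw [hLdef, rot_rot hV hd₀mem (by omega)]
    rw [h1]
    exact hmin _ (Finset.mem_range.mpr (Nat.mod_lt _ hVpos))
  -- unbordered
  intro b u v hb hu h1 h2
  have hlb : 0 < b.length := List.length_pos_iff.mpr hb
  have hlu : 0 < u.length := List.length_pos_iff.mpr hu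
  have hLbu : L.length = b.length + u.length := by rw [h1]; simp
  have hLvb : L.length = v.length + b.length := by rw [h2]; simp
  set d := v.length with hd
  have hdu : u.length = d := by omega
  have hdpos : 0 < d := by omega
  have hdlt : d < L.length := by omega
  have hbl : b.length = L.length - d := by omega
  have hrot1 : rot d L = b ++ v := by
    rw [rot, h2, hd, List.drop_left, List.take_left]
  have hrot2 : rot (L.length - d) L = u ++ b := by
    rw [rot, ← hbl, h1, List.drop_left, List.take_left]
  have hlt1 : L < rot d L := by
    rcases (hminL d hdlt.le).lt_or_eq with h | h
    · exact h
    · exfalso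
      obtain ⟨z, j, hj, hLz⟩ := rot_eq_self_power hdpos hdlt h.symm
      exact hprimL z j hj hLz
  have hlt2 : L < rot (L.length - d) L := by
    rcases (hminL (L.length - d) (by omega)).lt_or_eq with h | h
    · exact h
    · exfalso
      obtain ⟨z, j, hj, hLz⟩ := rot_eq_self_power (by omega) (by omega) h.symm
      exact hprimL z j hj hLz
  rw [hrot1] at hlt1
  rw [hrot2] at hlt2
  -- L = b ++ u < b ++ v  gives u < v
  have huv : u < v := by
    apply lt_of_append_lt_left b
    rw [← h1]; exact hlt1
  -- L = v ++ b < u ++ b  gives v < u or v = u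
  have hvu : v < u ∨ v = u := by
    apply le_of_append_lt v u b b (by rw [hdu])
    rw [← h2]; exact hlt2
  rcases hvu with hvu | hvu
  · exact absurd huv (lt_asymm hvu)
  · subst hvu
    rw [← h1] at hlt1
    exact absurd hlt1 (lt_irrefl L)

section Occ

/-- `w` occurs in `X` at position `i`. -/
def OccAt (w X : List α) (i : ℕ) : Prop := (X.drop i).take w.length = w

/-- the set of positions where `w` occurs in `X` -/
noncomputable def occSet (w X : List α) : Finset ℕ :=
  @Finset.filter _ (fun i => OccAt w X i) (Classical.decPred _) (Finset.range X.length)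

/-- number of occurrences of `w` in `X` -/
noncomputable def occ (w X : List α) : ℕ := (occSet w X).card

lemma occAt_le {w X : List α} (hw : w ≠ []) {i : ℕ} (h : OccAt w X i) :
    i + w.length ≤ X.length := by
  have hwpos : 0 < w.length := List.length_pos_iff.mpr hw
  have := congrArg List.length h
  simp only [List.length_take, List.length_drop] at this
  omega

lemma mem_occSet {w X : List α} (hw : w ≠ []) {i : ℕ} :
    i ∈ occSet w X ↔ OccAt w X i := by
  classical
  unfold occSet
  rw [Finset.mem_filter, Finset.mem_range]
  constructor
  · exact And.right
  · intro h
    have h1 := occAt_le hw h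
    have h2 : 0 < w.length := List.length_pos_iff.mpr hw
    exact ⟨by omega, h⟩

lemma occAt_append_left {w P : List α} (R : List α) {i : ℕ} (h : i + w.length ≤ P.length) :
    OccAt w (P ++ R) i ↔ OccAt w P i := by
  unfold OccAt
  rw [List.drop_append_of_le_length (by omega),
    List.take_append_of_le_length (by simp; omega)]

lemma occAt_append_right (w A S : List α) (j : ℕ) :
    OccAt w (A ++ S) (A.length + j) ↔ OccAt w S j := by
  unfold OccAt
  rw [List.drop_length_add_append]

lemma occAt_disjoint {w X : List α} (hub : Unbordered w) {i j : ℕ}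
    (hi : OccAt w X i) (hj : OccAt w X j) (h1 : i < j) (h2 : j < i + w.length) : False := by
  have hd0 : 0 < j - i := by omega
  have hdw : j - i < w.length := by omega
  have key : w.drop (j - i) = w.take (w.length - (j - i)) := by
    calc w.drop (j - i) = ((X.drop i).take w.length).drop (j - i) := by rw [hi]
      _ = ((X.drop i).drop (j - i)).take (w.length - (j - i)) := by rw [List.drop_take]
      _ = (X.drop j).take (w.length - (j - i)) := by
          rw [List.drop_drop]
          have hij : i + (j - i) = j := by omega
          rw [hij]
      _ = ((X.drop j).take w.length).take (w.length - (j - i)) := by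
          rw [List.take_take, Nat.min_eq_left (by omega)]
      _ = w.take (w.length - (j - i)) := by rw [hj]
  apply hub (w.drop (j - i)) (w.drop (w.length - (j - i))) (w.take (j - i))
  · apply List.length_pos_iff.mp
    rw [List.length_drop]
    omega
  · apply List.length_pos_iff.mp
    rw [List.length_drop]
    omega
  · rw [key]
    exact (List.take_append_drop _ _).symm
  · exact (List.take_append_drop _ _).symm

lemma occAt_iff {w X : List α} (hw : w ≠ []) {i : ℕ} :
    OccAt w X i ↔ ∃ p s : List α, p.length = i ∧ X = p ++ (w ++ s) := by
  constructor
  · intro h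
    have hle := occAt_le hw h
    have hwpos : 0 < w.length := List.length_pos_iff.mpr hw
    refine ⟨X.take i, X.drop (i + w.length), by simp; omega, ?_⟩
    conv_lhs => rw [← List.take_append_drop i X]
    congr 1
    conv_lhs => rw [← List.take_append_drop w.length (X.drop i)]
    rw [h, List.drop_drop]
  · rintro ⟨p, s, hp, rfl⟩
    unfold OccAt
    subst hp
    rw [List.drop_left, List.take_append_of_le_length le_rfl]
    simp

lemma occ_append_lower {w P m S : List α} (hw : w ≠ []) :
    occ w P + occ w S ≤ occ w (P ++ m ++ S) := by
  classical
  set X := P ++ m ++ S with hX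
  have hXassoc : X = P ++ (m ++ S) := by rw [hX, List.append_assoc]
  have hA : occSet w P ⊆ occSet w X := by
    intro i hi
    rw [mem_occSet hw] at hi ⊢
    rw [hXassoc, occAt_append_left _ (occAt_le hw hi)]
    exact hi
  have hB : (occSet w S).image (fun j => P.length + m.length + j) ⊆ occSet w X := by
    intro i hi
    rw [Finset.mem_image] at hi
    obtain ⟨j, hj, rfl⟩ := hi
    rw [mem_occSet hw] at hj ⊢
    have : P.length + m.length + j = (P ++ m).length + j := by simp
    rw [this, hX, occAt_append_right]
    exact hj
  have hdisj : Disjoint (occSet w P) ((occSet w S).image (fun j => P.length + m.length + j)) := by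
    rw [Finset.disjoint_left]
    intro i hi hi'
    rw [mem_occSet hw] at hi
    have h1 := occAt_le hw hi
    have hwpos : 0 < w.length := List.length_pos_iff.mpr hw
    rw [Finset.mem_image] at hi'
    obtain ⟨j, _, hj⟩ := hi'
    omega
  have himg : ((occSet w S).image (fun j => P.length + m.length + j)).card = occ w S :=
    Finset.card_image_of_injective _ (fun a b h => by omega)
  calc occ w P + occ w S
      = (occSet w P).card + ((occSet w S).image (fun j => P.length + m.length + j)).card := by
        rw [himg]; rfl
    _ = (occSet w P ∪ (occSet w S).image (fun j => P.length + m.length + j)).card :=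
        (Finset.card_union_of_disjoint hdisj).symm
    _ ≤ (occSet w X).card := Finset.card_le_card (Finset.union_subset hA hB)

lemma occ_append_upper {w P m S : List α} (hw : w ≠ []) (hub : Unbordered w)
    (hm : m.length ≤ 1) :
    occ w (P ++ m ++ S) ≤ occ w P + occ w S + 1 := by
  classical
  set X := P ++ m ++ S with hX
  have hXassoc : X = P ++ (m ++ S) := by rw [hX, List.append_assoc]
  have hwpos : 0 < w.length := List.length_pos_iff.mpr hw
  set C : Finset ℕ := (occSet w X).filter
    (fun i => P.length < i + w.length ∧ i < P.length + m.length) with hC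
  have hsub : occSet w X ⊆ occSet w P ∪ (occSet w S).image (fun j => P.length + m.length + j) ∪ C := by
    intro i hi
    rw [Finset.mem_union, Finset.mem_union]
    rw [mem_occSet hw] at hi
    rcases le_or_gt (i + w.length) P.length with h1 | h1
    · left; left
      rw [mem_occSet hw]
      rw [hXassoc, occAt_append_left _ h1] at hi
      exact hi
    · rcases le_or_gt (P.length + m.length) i with h2 | h2
      · left; right
        rw [Finset.mem_image]
        refine ⟨i - (P.length + m.length), ?_, by omega⟩
        rw [mem_occSet hw]
        have hlen : (P ++ m).length = P.length + m.length := by simp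
        have : i = (P ++ m).length + (i - (P.length + m.length)) := by rw [hlen]; omega
        rw [this, hX] at hi
        rw [← occAt_append_right w (P ++ m) S]
        exact hi
      · right
        rw [hC, Finset.mem_filter]
        exact ⟨(mem_occSet hw).mpr hi, h1, h2⟩
  have hCcard : C.card ≤ 1 := by
    rw [Finset.card_le_one]
    intro a ha b hb
    rw [hC, Finset.mem_filter, mem_occSet hw] at ha hb
    obtain ⟨ha1, ha2, ha3⟩ := ha
    obtain ⟨hb1, hb2, hb3⟩ := hb
    by_contra hne
    rcases lt_or_gt_of_ne hne with h | h
    · exact occAt_disjoint hub ha1 hb1 h (by omega)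
    · exact occAt_disjoint hub hb1 ha1 h (by omega)
  calc occ w X ≤ (occSet w P ∪ (occSet w S).image (fun j => P.length + m.length + j) ∪ C).card :=
        Finset.card_le_card hsub
    _ ≤ (occSet w P ∪ (occSet w S).image (fun j => P.length + m.length + j)).card + C.card :=
        Finset.card_union_le _ _
    _ ≤ ((occSet w P).card + ((occSet w S).image (fun j => P.length + m.length + j)).card) + C.card := by
        have := Finset.card_union_le (occSet w P) ((occSet w S).image (fun j => P.length + m.length + j))
        omega
    _ ≤ occ w P + occ w S + 1 := by
        have h1 := Finset.card_image_le (s := occSet w S) (f := fun j => P.length + m.length + j)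
        unfold occ
        omega

lemma occ_wpow_ge {w : List α} (hw : w ≠ []) (n : ℕ) : n ≤ occ w (wpow n w) := by
  classical
  have hwpos : 0 < w.length := List.length_pos_iff.mpr hw
  have : (Finset.range n).card ≤ (occSet w (wpow n w)).card := by
    apply Finset.card_le_card_of_injOn (fun k => k * w.length)
    · intro k hk
      rw [Finset.mem_coe, Finset.mem_range] at hk
      rw [Finset.mem_coe, mem_occSet hw]
      unfold OccAt
      rw [drop_wpow_mul k n w hk.le]
      have hnk : wpow (n - k) w = w ++ wpow (n - k - 1) w := by
        have h5 : n - k = (n - k - 1) + 1 := by omega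
        rw [h5, wpow_succ]
        simp
      rw [hnk, List.take_append_of_le_length le_rfl]
      simp
    · intro a _ b _ hab
      simp only at hab
      exact Nat.eq_of_mul_eq_mul_right hwpos hab
  simpa [occ] using this

lemma segment_wpow {w : List α} (hw : w ≠ []) :
    ∀ i n, i + w.length ≤ n * w.length →
      ((wpow n w).drop i).take w.length = rot (i % w.length) w := by
  have hwpos : 0 < w.length := List.length_pos_iff.mpr hw
  intro i
  induction i using Nat.strong_induction_on with
  | _ i ih =>
    intro n hin
    have hn1 : 1 ≤ n := by
      rcases Nat.eq_zero_or_pos n with rfl | h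
      · rw [Nat.zero_mul] at hin; omega
      · exact h
    have hsplit : wpow n w = w ++ wpow (n - 1) w := by
      have h5 : n = (n - 1) + 1 := by omega
      rw [h5, wpow_succ]
      simp
    rcases lt_or_ge i w.length with hi | hi
    · rw [Nat.mod_eq_of_lt hi, hsplit,
        List.drop_append_of_le_length hi.le,
        List.take_append]
      have hlen : (w.drop i).length = w.length - i := by simp
      rw [hlen]
      rcases Nat.eq_zero_or_pos i with rfl | hipos
      · simp [rot]
      · have hn2 : 2 ≤ n := by
          by_contra hcon
          push_neg at hcon
          have hn1' : n = 1 := by omega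
          rw [hn1', one_mul] at hin
          omega
        have : wpow (n - 1) w = w ++ wpow (n - 2) w := by
          have h1 : n - 1 = (n - 2) + 1 := by omega
          rw [h1, wpow_succ]
        rw [this, List.take_append_of_le_length (by omega)]
        have h6 : w.length - (w.length - i) = i := by omega
        rw [h6, List.take_of_length_le (by simp)]
        rfl
    · have hirw : i = w.length + (i - w.length) := by omega
      have hdrop : (wpow n w).drop i = (wpow (n - 1) w).drop (i - w.length) := by
        rw [hsplit]
        conv_lhs => rw [hirw]
        rw [List.drop_length_add_append]
      have hmod : (i - w.length) % w.length = i % w.length := by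
        conv_rhs => rw [hirw, Nat.add_comm, Nat.add_mod_right]
      have hle : (i - w.length) + w.length ≤ (n - 1) * w.length := by
        have : (n - 1) * w.length = n * w.length - w.length := by
          rw [Nat.sub_one_mul]
        omega
      rw [hdrop, ih (i - w.length) (by omega) (n - 1) hle, hmod]

lemma occAt_wpow_rot {w v : List α} (hw : w ≠ []) {n i : ℕ} (hv : v.length = w.length)
    (h : OccAt v (wpow n w) i) : v = rot (i % w.length) w := by
  have hvne : v ≠ [] := by
    intro hcon
    rw [hcon] at hv
    simp only [List.length_nil] at hv
    exact (List.length_pos_iff.mpr hw).ne (hv.symm ▸ rfl)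
  have hle := occAt_le hvne h
  rw [length_wpow, hv] at hle
  unfold OccAt at h
  rw [hv] at h
  rw [← h, segment_wpow hw i n (by omega)]

end Occ

section FreeProd

open Monoid Monoid.CoprodI

variable {ι : Type*} {M : ι → Type*} [∀ i, Group (M i)]

/-- reduced words as plain lists -/
def Red (L : List (Σ i, M i)) : Prop :=
  (∀ l ∈ L, l.2 ≠ 1) ∧ L.Chain' (fun a b => a.1 ≠ b.1)

lemma red_nil : Red ([] : List (Σ i, M i)) := ⟨by simp, List.isChain_nil⟩

lemma red_append_iff {A B : List (Σ i, M i)} :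
    Red (A ++ B) ↔ Red A ∧ Red B ∧ ∀ x ∈ A.getLast?, ∀ y ∈ B.head?, x.1 ≠ y.1 := by
  unfold Red List.Chain'
  rw [List.isChain_append]
  constructor
  · rintro ⟨hmem, h1, h2, h3⟩
    exact ⟨⟨fun l hl => hmem l (by simp [hl]), h1⟩,
      ⟨fun l hl => hmem l (by simp [hl]), h2⟩, h3⟩
  · rintro ⟨⟨hA, h1⟩, ⟨hB, h2⟩, h3⟩
    refine ⟨fun l hl => ?_, h1, h2, h3⟩
    rcases List.mem_append.mp hl with h | h
    · exact hA l h
    · exact hB l h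

/-- product of a list of letters in the free product -/
def prodl (L : List (Σ i, M i)) : CoprodI M :=
  (L.map fun l => CoprodI.of l.2).prod

@[simp] lemma prodl_nil : prodl ([] : List (Σ i, M i)) = 1 := rfl

lemma prodl_append (A B : List (Σ i, M i)) : prodl (A ++ B) = prodl A * prodl B := by
  unfold prodl
  rw [List.map_append, List.prod_append]

lemma prodl_cons (a : (Σ i, M i)) (L : List (Σ i, M i)) :
    prodl (a :: L) = CoprodI.of a.2 * prodl L := by
  unfold prodl
  rw [List.map_cons, List.prod_cons]

lemma prodl_singleton (a : (Σ i, M i)) : prodl [a] = CoprodI.of a.2 := by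
  rw [prodl_cons, prodl_nil, mul_one]

lemma prodl_wpow (L : List (Σ i, M i)) (n : ℕ) : prodl (wpow n L) = (prodl L) ^ n := by
  induction n with
  | zero => simp
  | succ n ih => rw [wpow_succ, prodl_append, ih, pow_succ']

/-- the reduced word of an element -/
noncomputable def wordOf (g : CoprodI M) : List (Σ i, M i) :=
  (@Word.equiv ι M _ (Classical.decEq ι) (fun i => Classical.decEq (M i)) g).toList

lemma red_wordOf (g : CoprodI M) : Red (wordOf g) :=
  ⟨(@Word.equiv ι M _ (Classical.decEq ι) (fun i => Classical.decEq (M i)) g).ne_one,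
   (@Word.equiv ι M _ (Classical.decEq ι) (fun i => Classical.decEq (M i)) g).chain_ne⟩

lemma prodl_wordOf (g : CoprodI M) : prodl (wordOf g) = g :=
  Equiv.symm_apply_apply (@Word.equiv ι M _ (Classical.decEq ι) (fun i => Classical.decEq (M i))) g

lemma wordOf_unique {L : List (Σ i, M i)} (h : Red L) : wordOf (prodl L) = L := by
  have hW : prodl L = (@Word.equiv ι M _ (Classical.decEq ι)
      (fun i => Classical.decEq (M i))).symm (⟨L, h.1, h.2⟩ : Word M) := rfl
  unfold wordOf
  rw [hW, Equiv.apply_symm_apply]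

/-- formal inverse of a word -/
def invw (L : List (Σ i, M i)) : List (Σ i, M i) :=
  (L.map fun l => ⟨l.1, l.2⁻¹⟩).reverse

@[simp] lemma invw_nil : invw ([] : List (Σ i, M i)) = [] := rfl

lemma invw_cons (a : (Σ i, M i)) (L : List (Σ i, M i)) :
    invw (a :: L) = invw L ++ [⟨a.1, a.2⁻¹⟩] := by
  unfold invw
  simp

lemma invw_append (A B : List (Σ i, M i)) : invw (A ++ B) = invw B ++ invw A := by
  unfold invw
  simp

lemma invw_singleton (a : (Σ i, M i)) : invw [a] = [⟨a.1, a.2⁻¹⟩] := rfl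

@[simp] lemma invw_invw (L : List (Σ i, M i)) : invw (invw L) = L := by
  induction L with
  | nil => rfl
  | cons a L ih =>
    rw [invw_cons, invw_append, invw_singleton, ih]
    simp

@[simp] lemma length_invw (L : List (Σ i, M i)) : (invw L).length = L.length := by
  unfold invw; simp

lemma invw_eq_nil_iff {L : List (Σ i, M i)} : invw L = [] ↔ L = [] := by
  constructor
  · intro h
    have := congrArg List.length h
    simp at this
    exact this
  · rintro rfl; rfl

lemma prodl_invw (L : List (Σ i, M i)) : prodl (invw L) = (prodl L)⁻¹ := by
  induction L with
  | nil => simp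
  | cons a L ih =>
    rw [invw_cons, prodl_append, prodl_singleton, ih, prodl_cons]
    rw [mul_inv_rev, MonoidHom.map_inv]

lemma red_invw {L : List (Σ i, M i)} (h : Red L) : Red (invw L) := by
  constructor
  · intro l hl
    unfold invw at hl
    rw [List.mem_reverse, List.mem_map] at hl
    obtain ⟨x, hx, rfl⟩ := hl
    simpa using h.1 x hx
  · unfold invw List.Chain'
    rw [List.isChain_reverse, List.isChain_map]
    exact h.2.imp (fun a b hab => by simpa [flip] using fun hc => hab hc.symm)

/-- counting occurrences in a formal inverse -/
lemma occ_invw (v X : List (Σ i, M i)) (hv : v ≠ []) :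
    occ v (invw X) = occ (invw v) X := by
  classical
  have hvne' : invw v ≠ [] := fun h => hv (invw_eq_nil_iff.mp h)
  unfold occ
  apply Finset.card_bij' (fun i _ => X.length - v.length - i) (fun j _ => X.length - v.length - j)
  · intro i hi
    rw [mem_occSet hv] at hi
    have hle := occAt_le hv hi
    rw [length_invw] at hle
    rw [mem_occSet hvne']
    rw [occAt_iff hv] at hi
    obtain ⟨p, s, hp, hX⟩ := hi
    rw [occAt_iff hvne']
    refine ⟨invw s, invw p, ?_, ?_⟩
    · have h1 := congrArg List.length hX
      simp only [List.length_append, length_invw] at h1 ⊢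
      omega
    · have := congrArg invw hX
      rw [invw_invw, invw_append, invw_append] at this
      rw [this, List.append_assoc]
  · intro j hj
    rw [mem_occSet hvne'] at hj
    have hle := occAt_le hvne' hj
    rw [length_invw] at hle
    rw [mem_occSet hv]
    rw [occAt_iff hvne'] at hj
    obtain ⟨p, s, hp, hX⟩ := hj
    rw [occAt_iff hv]
    refine ⟨invw s, invw p, ?_, ?_⟩
    · have h1 := congrArg List.length hX
      simp only [List.length_append, length_invw] at h1 ⊢
      omega
    · have := congrArg invw hX
      rw [invw_append, invw_append, invw_invw] at this
      rw [this, List.append_assoc]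
  · intro i hi
    rw [mem_occSet hv] at hi
    have hle := occAt_le hv hi
    rw [length_invw] at hle
    omega
  · intro j hj
    rw [mem_occSet hvne'] at hj
    have hle := occAt_le hvne' hj
    rw [length_invw] at hle
    omega

/-- unborderedness passes to formal inverses -/
lemma unbordered_invw {w : List (Σ i, M i)} (h : Unbordered w) : Unbordered (invw w) := by
  intro b u v hb hu h1 h2
  apply h (invw b) (invw v) (invw u)
  · exact fun hc => hb (invw_eq_nil_iff.mp hc)
  · intro hc
    have hvb : v = [] := invw_eq_nil_iff.mp hc
    subst hvb
    rw [List.nil_append] at h2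
    rw [h2] at h1
    have := congrArg List.length h1
    simp at this
    exact hu this
  · have := congrArg invw h2
    rw [invw_invw, invw_append] at this
    exact this
  · have := congrArg invw h1
    rw [invw_invw, invw_append] at this
    exact this

/-- The fundamental cancellation structure theorem for products of reduced words. -/
theorem struct (U V : List (Σ i, M i)) (hU : Red U) (hV : Red V) :
    ∃ P mL c mR m S : List (Σ i, M i),
      U = P ++ mL ++ c ∧ V = invw c ++ mR ++ S ∧
      mL.length ≤ 1 ∧ mR.length ≤ 1 ∧ m.length ≤ 1 ∧
      Red (P ++ m ++ S) ∧ prodl U * prodl V = prodl (P ++ m ++ S) := by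
  suffices H : ∀ N, ∀ (U V : List (Σ i, M i)), U.length ≤ N → Red U → Red V →
      ∃ P mL c mR m S : List (Σ i, M i),
        U = P ++ mL ++ c ∧ V = invw c ++ mR ++ S ∧
        mL.length ≤ 1 ∧ mR.length ≤ 1 ∧ m.length ≤ 1 ∧
        Red (P ++ m ++ S) ∧ prodl U * prodl V = prodl (P ++ m ++ S) by
    exact H U.length U V le_rfl hU hV
  intro N
  induction N with
  | zero =>
    intro U V hN hU hV
    have hUnil : U = [] := List.length_eq_zero_iff.mp (by omega)
    subst hUnil
    exact ⟨[], [], [], [], [], V, by simp, by simp, by simp, by simp, by simp,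
      by simpa using hV, by simp⟩
  | succ N ih =>
    intro U V hN hU hV
    rcases List.eq_nil_or_concat U with rfl | ⟨U', x, rfl⟩
    · exact ⟨[], [], [], [], [], V, by simp, by simp, by simp, by simp, by simp,
        by simpa using hV, by simp⟩
    rw [List.concat_eq_append] at *
    -- facts about U
    have hU2 := red_append_iff.mp hU
    have hU' : Red U' := hU2.1
    have hxne : x.2 ≠ 1 := hU2.2.1.1 x (by simp)
    have hUlast : ∀ a ∈ U'.getLast?, a.1 ≠ x.1 := fun a ha => hU2.2.2 a ha x rfl
    cases V with
    | nil =>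
      exact ⟨U' ++ [x], [], [], [], [], [], by simp, by simp, by simp, by simp, by simp,
        by simpa using hU, by simp⟩
    | cons y V' =>
      have hyne : y.2 ≠ 1 := hV.1 y (by simp)
      have hV' : Red V' := ⟨fun l hl => hV.1 l (by simp [hl]), (List.isChain_cons.mp hV.2).2⟩
      have hVhead : ∀ b ∈ V'.head?, y.1 ≠ b.1 := (List.isChain_cons.mp hV.2).1
      by_cases hxy : x.1 = y.1
      · rcases x with ⟨i, xv⟩
        rcases y with ⟨j, yv⟩
        dsimp only at hxy
        subst hxy
        by_cases hp : xv * yv = 1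
        · -- cancellation
          have hyv : yv = xv⁻¹ := (inv_eq_of_mul_eq_one_right hp).symm
          obtain ⟨P, mL, c, mR, m, S, h1, h2, h3, h4, h5, h6, h7⟩ :=
            ih U' V' (by simp at hN; omega) hU' hV'
          refine ⟨P, mL, c ++ [⟨i, xv⟩], mR, m, S, ?_, ?_, h3, h4, h5, h6, ?_⟩
          · rw [h1]; simp [List.append_assoc]
          · rw [invw_append, invw_singleton]
            subst hyv
            rw [h2]
            simp
          · rw [prodl_append, prodl_singleton, prodl_cons]
            calc prodl U' * CoprodI.of xv * (CoprodI.of yv * prodl V')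
                = prodl U' * ((CoprodI.of xv * CoprodI.of yv) * prodl V') := by
                  simp [mul_assoc]
              _ = prodl U' * prodl V' := by
                  rw [← MonoidHom.map_mul, hp, MonoidHom.map_one, one_mul]
              _ = prodl (P ++ m ++ S) := h7
        · -- merged letter
          refine ⟨U', [⟨i, xv⟩], [], [⟨i, yv⟩], [⟨i, xv * yv⟩], V',
            by simp, by simp, by simp, by simp, by simp, ?_, ?_⟩
          · rw [red_append_iff]
            refine ⟨?_, hV', ?_⟩
            · rw [red_append_iff]
              refine ⟨hU', ⟨by simpa using hp, List.isChain_singleton _⟩, ?_⟩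
              intro a ha b hb
              simp at hb
              subst hb
              exact hUlast a ha
            · intro a ha b hb
              rw [List.getLast?_append] at ha
              simp at ha
              subst ha
              exact hVhead b hb
          · calc prodl (U' ++ [⟨i, xv⟩]) * prodl (⟨i, yv⟩ :: V')
                = prodl U' * (CoprodI.of xv * CoprodI.of yv) * prodl V' := by
                  rw [prodl_append, prodl_singleton, prodl_cons]
                  simp [mul_assoc]
              _ = prodl U' * CoprodI.of (xv * yv) * prodl V' := by
                  rw [← MonoidHom.map_mul]
              _ = prodl (U' ++ [⟨i, xv * yv⟩] ++ V') := by
                  rw [prodl_append, prodl_append, prodl_singleton]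
      · -- no interaction
        refine ⟨U' ++ [x], [], [], [], [], y :: V',
          by simp, by simp, by simp, by simp, by simp, ?_, ?_⟩
        · have : (U' ++ [x]) ++ [] ++ (y :: V') = (U' ++ [x]) ++ (y :: V') := by simp
          rw [this, red_append_iff]
          refine ⟨hU, hV, ?_⟩
          intro a ha b hb
          rw [List.getLast?_concat] at ha
          simp at ha hb
          subst ha
          subst hb
          exact hxy
        · simp [prodl_append, prodl_cons, prodl_singleton, mul_assoc]

/-- cyclically reduced nonempty words -/
def Cyc (L : List (Σ i, M i)) : Prop :=
  L ≠ [] ∧ Red L ∧ ∀ x ∈ L.getLast?, ∀ y ∈ L.head?, x.1 ≠ y.1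

lemma wpow_nil (n : ℕ) : wpow n ([] : List (Σ i, M i)) = [] := by
  induction n with
  | zero => rfl
  | succ n ih => rw [wpow_succ, ih]; rfl

lemma head?_wpow {L : List (Σ i, M i)} (n : ℕ) (hn : 1 ≤ n) :
    (wpow n L).head? = L.head? := by
  obtain ⟨t, rfl⟩ : ∃ t, n = t + 1 := ⟨n - 1, by omega⟩
  rw [wpow_succ]
  cases L with
  | nil => simp [wpow_nil]
  | cons a T => rfl

lemma red_wpow {L : List (Σ i, M i)} (h : Cyc L) (n : ℕ) : Red (wpow n L) := by
  induction n with
  | zero => exact red_nil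
  | succ n ih =>
    rw [wpow_succ, red_append_iff]
    refine ⟨h.2.1, ih, ?_⟩
    intro a ha b hb
    rcases Nat.eq_zero_or_pos n with rfl | hn
    · simp at hb
    · rw [head?_wpow n hn] at hb
      exact h.2.2 a ha b hb

lemma cyc_rot {L : List (Σ i, M i)} (h : Cyc L) {d : ℕ} (hd : d < L.length) :
    Cyc (rot d L) := by
  rcases Nat.eq_zero_or_pos d with rfl | hdpos
  · rw [rot_zero]; exact h
  have hA : L.take d ≠ [] := by
    apply List.length_pos_iff.mp
    rw [List.length_take]
    omega
  have hB : L.drop d ≠ [] := by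
    apply List.length_pos_iff.mp
    rw [List.length_drop]
    omega
  have hLsplit : L = L.take d ++ L.drop d := (List.take_append_drop d L).symm
  have hred := red_append_iff.mp (hLsplit ▸ h.2.1)
  have hheadA : L.head? = (L.take d).head? := by
    conv_lhs => rw [hLsplit]
    rw [List.head?_append_of_ne_nil _ hA]
  have hlastB : L.getLast? = (L.drop d).getLast? := by
    conv_lhs => rw [hLsplit]
    rw [List.getLast?_append]
    have : (L.drop d).getLast? ≠ none := by
      rw [Ne, List.getLast?_eq_none_iff]
      exact hB
    cases hcase : (L.drop d).getLast? with
    | none => exact absurd hcase this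
    | some b => simp
  refine ⟨by simp [rot, hB], ?_, ?_⟩
  · rw [rot, red_append_iff]
    refine ⟨hred.2.1, hred.1, ?_⟩
    intro a ha b hb
    exact h.2.2 a (hlastB ▸ ha) b (hheadA ▸ hb)
  · intro a ha b hb
    rw [rot] at ha hb
    rw [List.getLast?_append] at ha
    have haA : a ∈ (L.take d).getLast? := by
      have : (L.take d).getLast? ≠ none := by
        rw [Ne, List.getLast?_eq_none_iff]
        exact hA
      cases hcase : (L.take d).getLast? with
      | none => exact absurd hcase this
      | some b' => rw [hcase] at ha; simpa using ha
    rw [List.head?_append_of_ne_nil _ hB] at hb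
    exact hred.2.2 a haA b hb

lemma isConj_prodl_rot (L : List (Σ i, M i)) (d : ℕ) :
    IsConj (prodl L) (prodl (rot d L)) := by
  rw [isConj_iff]
  refine ⟨(prodl (L.take d))⁻¹, ?_⟩
  have : prodl L = prodl (L.take d) * prodl (L.drop d) := by
    conv_lhs => rw [← List.take_append_drop d L]
    rw [prodl_append]
  rw [rot, prodl_append, this]
  group

/-- cyclic reduction: every reduced word is conjugate to a short or cyclically reduced word -/
lemma cyclic_reduce : ∀ (L : List (Σ i, M i)), Red L →
    ∃ L', IsConj (prodl L) (prodl L') ∧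
      ((L'.length ≤ 1 ∧ Red L') ∨ Cyc L') := by
  suffices H : ∀ N, ∀ (L : List (Σ i, M i)), L.length ≤ N → Red L →
      ∃ L', IsConj (prodl L) (prodl L') ∧ ((L'.length ≤ 1 ∧ Red L') ∨ Cyc L') by
    intro L hL; exact H L.length L le_rfl hL
  intro N
  induction N with
  | zero =>
    intro L hN hL
    exact ⟨L, IsConj.refl _, Or.inl ⟨by omega, hL⟩⟩
  | succ N ih =>
    intro L hN hL
    rcases le_or_gt L.length 1 with hlen | hlen
    · exact ⟨L, IsConj.refl _, Or.inl ⟨hlen, hL⟩⟩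
    -- decompose L = a :: T ++ [b]
    cases L with
    | nil => simp at hlen
    | cons a T0 =>
      rcases List.eq_nil_or_concat T0 with rfl | ⟨T, b, rfl⟩
      · simp at hlen
      rw [List.concat_eq_append] at *
      have hsplit : a :: (T ++ [b]) = (a :: T) ++ [b] := by simp
      by_cases hab : b.1 = a.1
      · rcases a with ⟨i, av⟩
        rcases b with ⟨j, bv⟩
        dsimp only at hab
        subst hab
        -- conjugate by (of av)⁻¹
        have hred2 := red_append_iff.mp (hsplit ▸ hL)
        have haT : Red (⟨j, av⟩ :: T) := hred2.1
        have hT : Red T := ⟨fun l hl => haT.1 l (by simp [hl]), (List.isChain_cons.mp haT.2).2⟩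
        have hconj1 : IsConj (prodl (⟨j, av⟩ :: (T ++ [⟨j, bv⟩])))
            (prodl T * CoprodI.of bv * CoprodI.of av) := by
          rw [isConj_iff]
          refine ⟨(CoprodI.of av)⁻¹, ?_⟩
          rw [prodl_cons, prodl_append, prodl_singleton]
          group
        by_cases hp : bv * av = 1
        · obtain ⟨L'', hc, hcase⟩ := ih T (by simp at hN; omega) hT
          refine ⟨L'', ?_, hcase⟩
          apply IsConj.trans _ hc
          apply IsConj.trans hconj1
          rw [mul_assoc, ← MonoidHom.map_mul, hp, MonoidHom.map_one, mul_one]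
        · have hTb : Red (T ++ [⟨j, bv * av⟩]) := by
            rw [red_append_iff]
            refine ⟨hT, ⟨by simpa using hp, List.isChain_singleton _⟩, ?_⟩
            intro x hx y hy
            simp at hy
            subst hy
            cases T with
            | nil => simp at hx
            | cons t T' =>
              have : x ∈ (⟨j, av⟩ :: (t :: T')).getLast? := by
                rw [List.getLast?_cons_cons]
                exact hx
              have h9 := hred2.2.2 x this ⟨j, bv⟩ rfl
              exact h9
          obtain ⟨L'', hc, hcase⟩ := ih (T ++ [⟨j, bv * av⟩]) (by simp at hN ⊢; omega) hTb
          refine ⟨L'', ?_, hcase⟩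
          apply IsConj.trans _ hc
          apply IsConj.trans hconj1
          rw [prodl_append, prodl_singleton, mul_assoc, ← MonoidHom.map_mul]
      · refine ⟨a :: (T ++ [b]), IsConj.refl _, Or.inr ⟨by simp, hL, ?_⟩⟩
        intro x hx y hy
        rw [hsplit, List.getLast?_concat] at hx
        simp at hx hy
        subst hx
        subst hy
        exact hab

@[simp] lemma occ_nil (w : List (Σ i, M i)) : occ w ([] : List (Σ i, M i)) = 0 := by
  unfold occ occSet
  simp

/-- the Brooks counting quasimorphism -/
noncomputable def phi (w : List (Σ i, M i)) (g : CoprodI M) : ℝ :=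
  (occ w (wordOf g) : ℝ) - (occ (invw w) (wordOf g) : ℝ)

lemma wordOf_one : wordOf (1 : CoprodI M) = [] := by
  simpa using wordOf_unique (red_nil (M := M))

lemma phi_one (w : List (Σ i, M i)) : phi w (1 : CoprodI M) = 0 := by
  unfold phi
  rw [wordOf_one]
  simp

lemma wordOf_inv (g : CoprodI M) : wordOf g⁻¹ = invw (wordOf g) := by
  have h : prodl (invw (wordOf g)) = g⁻¹ := by rw [prodl_invw, prodl_wordOf]
  rw [← h, wordOf_unique (red_invw (red_wordOf g))]

lemma phi_inv (w : List (Σ i, M i)) (hw : w ≠ []) (g : CoprodI M) :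
    phi w g⁻¹ = - phi w g := by
  have hw' : invw w ≠ [] := fun h => hw (invw_eq_nil_iff.mp h)
  unfold phi
  rw [wordOf_inv, occ_invw _ _ hw, occ_invw _ _ hw', invw_invw]
  ring

lemma phi_defect (w : List (Σ i, M i)) (hw : w ≠ []) (hub : Unbordered w)
    (u v : CoprodI M) : |phi w (u * v) - phi w u - phi w v| ≤ 3 := by
  have hw' : invw w ≠ [] := fun h => hw (invw_eq_nil_iff.mp h)
  have hub' : Unbordered (invw w) := unbordered_invw hub
  obtain ⟨P, mL, c, mR, m, S, h1, h2, h3, h4, h5, h6, h7⟩ :=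
    struct (wordOf u) (wordOf v) (red_wordOf u) (red_wordOf v)
  rw [prodl_wordOf, prodl_wordOf] at h7
  have hX : wordOf (u * v) = P ++ m ++ S := by
    rw [h7, wordOf_unique h6]
  have e1l : occ w P + occ w c ≤ occ w (wordOf u) := by
    rw [h1]; exact occ_append_lower hw
  have e1u : occ w (wordOf u) ≤ occ w P + occ w c + 1 := by
    rw [h1]; exact occ_append_upper hw hub h3
  have e2l : occ (invw w) P + occ (invw w) c ≤ occ (invw w) (wordOf u) := by
    rw [h1]; exact occ_append_lower hw'
  have e2u : occ (invw w) (wordOf u) ≤ occ (invw w) P + occ (invw w) c + 1 := by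
    rw [h1]; exact occ_append_upper hw' hub' h3
  have e3l : occ w (invw c) + occ w S ≤ occ w (wordOf v) := by
    rw [h2]; exact occ_append_lower hw
  have e3u : occ w (wordOf v) ≤ occ w (invw c) + occ w S + 1 := by
    rw [h2]; exact occ_append_upper hw hub h4
  have e4l : occ (invw w) (invw c) + occ (invw w) S ≤ occ (invw w) (wordOf v) := by
    rw [h2]; exact occ_append_lower hw'
  have e4u : occ (invw w) (wordOf v) ≤ occ (invw w) (invw c) + occ (invw w) S + 1 := by
    rw [h2]; exact occ_append_upper hw' hub' h4
  have e5l : occ w P + occ w S ≤ occ w (wordOf (u * v)) := by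
    rw [hX]; exact occ_append_lower hw
  have e5u : occ w (wordOf (u * v)) ≤ occ w P + occ w S + 1 := by
    rw [hX]; exact occ_append_upper hw hub h5
  have e6l : occ (invw w) P + occ (invw w) S ≤ occ (invw w) (wordOf (u * v)) := by
    rw [hX]; exact occ_append_lower hw'
  have e6u : occ (invw w) (wordOf (u * v)) ≤ occ (invw w) P + occ (invw w) S + 1 := by
    rw [hX]; exact occ_append_upper hw' hub' h5
  have s1 : occ w (invw c) = occ (invw w) c := occ_invw w c hw
  have s2 : occ (invw w) (invw c) = occ w c := by
    rw [occ_invw _ _ hw', invw_invw]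
  rw [s1] at e3l e3u
  rw [s2] at e4l e4u
  have r1l : ((occ w P : ℝ)) + occ w c ≤ occ w (wordOf u) := by exact_mod_cast e1l
  have r1u : ((occ w (wordOf u) : ℝ)) ≤ occ w P + occ w c + 1 := by exact_mod_cast e1u
  have r2l : ((occ (invw w) P : ℝ)) + occ (invw w) c ≤ occ (invw w) (wordOf u) := by
    exact_mod_cast e2l
  have r2u : ((occ (invw w) (wordOf u) : ℝ)) ≤ occ (invw w) P + occ (invw w) c + 1 := by
    exact_mod_cast e2u
  have r3l : ((occ (invw w) c : ℝ)) + occ w S ≤ occ w (wordOf v) := by exact_mod_cast e3l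
  have r3u : ((occ w (wordOf v) : ℝ)) ≤ occ (invw w) c + occ w S + 1 := by exact_mod_cast e3u
  have r4l : ((occ w c : ℝ)) + occ (invw w) S ≤ occ (invw w) (wordOf v) := by exact_mod_cast e4l
  have r4u : ((occ (invw w) (wordOf v) : ℝ)) ≤ occ w c + occ (invw w) S + 1 := by
    exact_mod_cast e4u
  have r5l : ((occ w P : ℝ)) + occ w S ≤ occ w (wordOf (u * v)) := by exact_mod_cast e5l
  have r5u : ((occ w (wordOf (u * v)) : ℝ)) ≤ occ w P + occ w S + 1 := by exact_mod_cast e5u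
  have r6l : ((occ (invw w) P : ℝ)) + occ (invw w) S ≤ occ (invw w) (wordOf (u * v)) := by
    exact_mod_cast e6l
  have r6u : ((occ (invw w) (wordOf (u * v)) : ℝ)) ≤ occ (invw w) P + occ (invw w) S + 1 := by
    exact_mod_cast e6u
  unfold phi
  rw [abs_le]
  constructor
  · linarith
  · linarith

lemma phi_prod_le (w : List (Σ i, M i)) (hw : w ≠ []) (hub : Unbordered w) :
    ∀ (l : List (CoprodI M)), l ≠ [] →
      phi w l.prod + 3 ≤ (l.map (phi w)).sum + 3 * l.length := by
  intro l
  induction l with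
  | nil => intro h; exact absurd rfl h
  | cons a t ih =>
    intro _
    cases t with
    | nil => simp
    | cons b t' =>
      have hd := phi_defect w hw hub a ((b :: t').prod)
      rw [abs_le] at hd
      have h2 := ih (by simp)
      have hlen : ((a :: b :: t').length : ℝ) = ((b :: t').length : ℝ) + 1 := by
        push_cast [List.length_cons]
        ring
      rw [List.prod_cons, List.map_cons, List.sum_cons, hlen]
      have hprod := hd.2
      linarith

lemma phi_comm_le (w : List (Σ i, M i)) (hw : w ≠ []) (hub : Unbordered w)
    (a b : CoprodI M) : phi w ⁅a, b⁆ ≤ 9 := by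
  rw [commutatorElement_def]
  have d1 := (abs_le.mp (phi_defect w hw hub (a * b * a⁻¹) b⁻¹)).2
  have d2 := (abs_le.mp (phi_defect w hw hub (a * b) a⁻¹)).2
  have d3 := (abs_le.mp (phi_defect w hw hub a b)).2
  have i1 := phi_inv w hw a
  have i2 := phi_inv w hw b
  linarith

section Homog

open Filter

variable {G : Type*} [Group G]

lemma homog_subadd {f : G → ℝ} {D : ℝ} (hdef : ∀ u v : G, |f (u * v) - f u - f v| ≤ D)
    (g : G) : Subadditive (fun n => f (g ^ n) + D) := by
  intro m n
  have h := (abs_le.mp (hdef (g ^ m) (g ^ n))).2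
  rw [← pow_add] at h
  show f (g ^ (m + n)) + D ≤ (f (g ^ m) + D) + (f (g ^ n) + D)
  linarith

lemma homog_pow_lower {f : G → ℝ} {D : ℝ} (hdef : ∀ u v : G, |f (u * v) - f u - f v| ≤ D)
    (g : G) : ∀ n : ℕ, 1 ≤ n → (n : ℝ) * f g - D * ((n : ℝ) - 1) ≤ f (g ^ n) := by
  intro n
  induction n with
  | zero => omega
  | succ n ih =>
    intro _
    rcases Nat.eq_zero_or_pos n with rfl | hn
    · simp
    · have h1 := ih hn
      have h2 := (abs_le.mp (hdef (g ^ n) g)).1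
      rw [← pow_succ] at h2
      push_cast
      linarith

lemma homog_bdd {f : G → ℝ} {D : ℝ} (hD : 0 ≤ D)
    (hdef : ∀ u v : G, |f (u * v) - f u - f v| ≤ D) (g : G) :
    BddBelow (Set.range fun n : ℕ => (f (g ^ n) + D) / n) := by
  refine ⟨min 0 (f g - D), ?_⟩
  rintro x ⟨n, rfl⟩
  rcases Nat.eq_zero_or_pos n with rfl | hn
  · simp
  · have hnpos : (0 : ℝ) < n := by exact_mod_cast hn
    have h1 := homog_pow_lower hdef g n hn
    have h2 : (f g - D) * n ≤ f (g ^ n) + D := by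
      have hD1 : D * ((n : ℝ) - 1) + D = D * n := by ring
      nlinarith
    calc min 0 (f g - D) ≤ f g - D := min_le_right _ _
      _ ≤ (f (g ^ n) + D) / n := by
          rw [le_div_iff₀ hnpos]
          exact h2

/-- homogenization of a quasimorphism -/
noncomputable def fhat (f : G → ℝ) {D : ℝ} (hdef : ∀ u v : G, |f (u * v) - f u - f v| ≤ D)
    (g : G) : ℝ :=
  (homog_subadd hdef g).lim

lemma fhat_tendsto {f : G → ℝ} {D : ℝ} (hD : 0 ≤ D)
    (hdef : ∀ u v : G, |f (u * v) - f u - f v| ≤ D) (g : G) :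
    Tendsto (fun n : ℕ => f (g ^ n) / n) atTop (nhds (fhat f hdef g)) := by
  have h1 := (homog_subadd hdef g).tendsto_lim (homog_bdd hD hdef g)
  have h2 := tendsto_const_div_atTop_nhds_zero_nat D
  have h3 := h1.sub h2
  rw [sub_zero] at h3
  apply h3.congr
  intro n
  rw [← sub_div, add_sub_cancel_right]

lemma fhat_le {f : G → ℝ} {D : ℝ} (hD : 0 ≤ D)
    (hdef : ∀ u v : G, |f (u * v) - f u - f v| ≤ D) (g : G) {N : ℕ} (hN : N ≠ 0) :
    fhat f hdef g ≤ (f (g ^ N) + D) / N :=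
  Subadditive.lim_le_div _ (homog_bdd hD hdef g) hN

lemma fhat_ge_one {f : G → ℝ} {D : ℝ} (hD : 0 ≤ D)
    (hdef : ∀ u v : G, |f (u * v) - f u - f v| ≤ D) (g : G)
    (h : ∀ n : ℕ, 1 ≤ n → (n : ℝ) ≤ f (g ^ n)) : 1 ≤ fhat f hdef g := by
  apply ge_of_tendsto (fhat_tendsto hD hdef g)
  filter_upwards [eventually_ge_atTop 1] with n hn
  have hnpos : (0 : ℝ) < n := by exact_mod_cast hn
  rw [le_div_iff₀ hnpos, one_mul]
  exact h n hn

lemma fhat_pow {f : G → ℝ} {D : ℝ} (hD : 0 ≤ D)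
    (hdef : ∀ u v : G, |f (u * v) - f u - f v| ≤ D) (g : G) {k : ℕ} (hk : 1 ≤ k) :
    fhat f hdef (g ^ k) = k * fhat f hdef g := by
  have h1 := fhat_tendsto hD hdef (g ^ k)
  have hcomp : Tendsto (fun n : ℕ => k * n) atTop atTop := by
    apply tendsto_atTop_mono (fun n : ℕ => Nat.le_mul_of_pos_left n hk)
    exact tendsto_id
  have h2 : Tendsto (fun n : ℕ => f (g ^ (k * n)) / (k * n : ℕ)) atTop
      (nhds (fhat f hdef g)) := (fhat_tendsto hD hdef g).comp hcomp
  have h3 := h2.const_mul (k : ℝ)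
  have h4 : Tendsto (fun n : ℕ => f ((g ^ k) ^ n) / n) atTop
      (nhds ((k : ℝ) * fhat f hdef g)) := by
    apply h3.congr'
    filter_upwards [eventually_ge_atTop 1] with n hn
    have hkpos : ((k : ℝ)) ≠ 0 := by positivity
    have hnpos : ((n : ℝ)) ≠ 0 := by
      have : (0:ℝ) < n := by exact_mod_cast hn
      linarith
    rw [← pow_mul]
    push_cast
    field_simp
  exact tendsto_nhds_unique h1 h4

lemma fhat_conj {f : G → ℝ} {D : ℝ} (hD : 0 ≤ D)
    (hdef : ∀ u v : G, |f (u * v) - f u - f v| ≤ D) (g t : G) :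
    fhat f hdef (t * g * t⁻¹) = fhat f hdef g := by
  set C := 2 * D + |f t| + |f t⁻¹| with hC
  have hkey : ∀ n : ℕ, |f ((t * g * t⁻¹) ^ n) - f (g ^ n)| ≤ C := by
    intro n
    rw [conj_pow]
    have h1 := hdef t (g ^ n * t⁻¹)
    have h2 := hdef (g ^ n) t⁻¹
    rw [← mul_assoc] at h1
    rw [abs_le] at h1 h2
    have h5 := le_abs_self (f t)
    have h6 := le_abs_self (f t⁻¹)
    have h7 := neg_abs_le (f t)
    have h8 := neg_abs_le (f t⁻¹)
    rw [abs_le]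
    constructor
    · linarith [h1.1, h2.1]
    · linarith [h1.2, h2.2]
  apply tendsto_nhds_unique (fhat_tendsto hD hdef (t * g * t⁻¹))
  have hlo : Tendsto (fun n : ℕ => f (g ^ n) / n - C / n) atTop
      (nhds (fhat f hdef g)) := by
    have := (fhat_tendsto hD hdef g).sub (tendsto_const_div_atTop_nhds_zero_nat C)
    rwa [sub_zero] at this
  have hhi : Tendsto (fun n : ℕ => f (g ^ n) / n + C / n) atTop
      (nhds (fhat f hdef g)) := by
    have := (fhat_tendsto hD hdef g).add (tendsto_const_div_atTop_nhds_zero_nat C)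
    rwa [add_zero] at this
  apply tendsto_of_tendsto_of_tendsto_of_le_of_le' hlo hhi
  · filter_upwards [eventually_ge_atTop 1] with n hn
    have hnpos : (0 : ℝ) < n := by exact_mod_cast hn
    have h := (abs_le.mp (hkey n)).1
    rw [← sub_div]
    gcongr
    linarith
  · filter_upwards [eventually_ge_atTop 1] with n hn
    have hnpos : (0 : ℝ) < n := by exact_mod_cast hn
    have h := (abs_le.mp (hkey n)).2
    rw [← add_div]
    gcongr
    linarith

lemma fhat_one {f : G → ℝ} {D : ℝ} (hD : 0 ≤ D)
    (hdef : ∀ u v : G, |f (u * v) - f u - f v| ≤ D) :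
    fhat f hdef (1 : G) = 0 := by
  apply tendsto_nhds_unique (fhat_tendsto hD hdef 1)
  have := tendsto_const_div_atTop_nhds_zero_nat (f 1)
  apply this.congr
  intro n
  rw [one_pow]

end Homog

lemma isConj_inv' {G : Type*} [Group G] {a b : G} (h : IsConj a b) : IsConj a⁻¹ b⁻¹ := by
  rw [isConj_iff] at h ⊢
  obtain ⟨c, hc⟩ := h
  exact ⟨c, by rw [← hc]; group⟩

lemma isConj_pow' {G : Type*} [Group G] {a b : G} (k : ℕ) (h : IsConj a b) :
    IsConj (a ^ k) (b ^ k) := by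
  rw [isConj_iff] at h ⊢
  obtain ⟨c, hc⟩ := h
  exact ⟨c, by rw [← hc, conj_pow]⟩

/-- The core estimate: if `g` is not conjugate into a factor and not conjugate to its
inverse, then any expression of `g ^ n` as a product of `m` commutators has `n ≤ 12 m`. -/
lemma gap_core (g : CoprodI M) (hg : ∀ (i : ι) (x : M i), ¬ IsConj (CoprodI.of x) g)
    (hgg : ¬ IsConj g g⁻¹) :
    ∀ n : ℕ, 1 ≤ n → ∀ m ∈ clSet (g ^ n), n ≤ 12 * m := by
  obtain ⟨L', hconj, hcase⟩ := cyclic_reduce (wordOf g) (red_wordOf g)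
  rw [prodl_wordOf] at hconj
  rcases hcase with ⟨hlen, hredL'⟩ | hcyc
  · exfalso
    cases L' with
    | nil =>
      have hg1 : g = 1 := by
        have : IsConj (1 : CoprodI M) g := by simpa using hconj.symm
        exact (isConj_one_right.mp this)
      exact hgg (by rw [hg1]; simp)
    | cons a t =>
      cases t with
      | nil =>
        apply hg a.1 a.2
        have : prodl [a] = CoprodI.of a.2 := prodl_singleton a
        rw [← Sigma.eta a, this] at hconj
        exact hconj.symm
      | cons b t' => simp at hlen
  · -- the cyclically reduced case
    have hL'ne := hcyc.1
    obtain ⟨V, k, hk, hLV, hVne, hVprim⟩ := exists_primitive_root L' hL'ne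
    have hVcyc : Cyc V := by
      have hsplit : L' = V ++ wpow (k - 1) V := by
        rw [hLV]
        have h1 : k = 1 + (k - 1) := by omega
        conv_lhs => rw [h1, wpow_add, wpow_one]
      have hred := red_append_iff.mp (hsplit ▸ hcyc.2.1)
      refine ⟨hVne, hred.1, ?_⟩
      intro x hx y hy
      rcases eq_or_lt_of_le hk with hk1 | hk2
      · have hVL : V = L' := by rw [hLV, ← hk1, wpow_one]
        exact hcyc.2.2 x (hVL ▸ hx) y (hVL ▸ hy)
      · apply hred.2.2 x hx y
        rw [head?_wpow (k - 1) (by omega)]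
        exact hy
    obtain ⟨d, hd, hub⟩ := exists_unbordered_rot V hVne hVprim
    set w : List (Σ i, M i) := rot d V with hwdef
    have hwcyc : Cyc w := cyc_rot hVcyc hd
    have hwne : w ≠ [] := hwcyc.1
    have hwinvne : invw w ≠ [] := fun h => hwne (invw_eq_nil_iff.mp h)
    set y : CoprodI M := prodl w with hydef
    have hconjV : IsConj (prodl V) y := isConj_prodl_rot V d
    have hconjk : IsConj g (y ^ k) := by
      have h1 : prodl L' = (prodl V) ^ k := by rw [hLV, prodl_wpow]
      rw [h1] at hconj
      exact hconj.trans (isConj_pow' k hconjV)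
    have hyinv : ¬ IsConj y y⁻¹ := by
      intro hcon
      apply hgg
      have h2 : IsConj (y ^ k) (y ^ k)⁻¹ := by
        rw [← inv_pow]
        exact isConj_pow' k hcon
      exact (hconjk.trans h2).trans (isConj_inv' hconjk).symm
    -- set up the quasimorphism
    have hD : (0 : ℝ) ≤ 3 := by norm_num
    have hdef := phi_defect w hwne hub
    have hflower : ∀ n : ℕ, 1 ≤ n → (n : ℝ) ≤ phi w (y ^ n) := by
      intro n hn
      have hword : wordOf (y ^ n) = wpow n w := by
        rw [hydef, ← prodl_wpow, wordOf_unique (red_wpow hwcyc n)]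
      unfold phi
      rw [hword]
      have hocc1 : n ≤ occ w (wpow n w) := occ_wpow_ge hwne n
      have hocc2 : occ (invw w) (wpow n w) = 0 := by
        by_contra hne
        obtain ⟨i, hi⟩ := Finset.card_pos.mp (Nat.pos_of_ne_zero hne)
        rw [mem_occSet hwinvne] at hi
        have hrot := occAt_wpow_rot hwne (by simp) hi
        apply hyinv
        have h4 := isConj_prodl_rot w (i % w.length)
        rw [← hrot, prodl_invw] at h4
        exact h4
      rw [hocc2]
      simp only [Nat.cast_zero, sub_zero]
      exact_mod_cast hocc1
    have hfy : 1 ≤ fhat (phi w) hdef y := fhat_ge_one hD hdef y hflower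
    have hfg : (1 : ℝ) ≤ fhat (phi w) hdef g := by
      obtain ⟨c, hc⟩ := isConj_iff.mp hconjk.symm
      rw [← hc, fhat_conj hD hdef _ c, fhat_pow hD hdef y hk]
      have hk' : (1 : ℝ) ≤ (k : ℝ) := by exact_mod_cast hk
      nlinarith
    intro n hn m hm
    obtain ⟨F, hF⟩ := hm
    set l : List (CoprodI M) := List.ofFn (fun i : Fin m => ⁅(F i).1, (F i).2⁆) with hl
    have hxl : g ^ n = l.prod := hF
    rcases Nat.eq_zero_or_pos m with rfl | hm1
    · exfalso
      have hln : l = [] := by rw [hl]; simp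
      rw [hln, List.prod_nil] at hxl
      have h0 : fhat (phi w) hdef (g ^ n) = 0 := by
        rw [hxl]
        exact fhat_one hD hdef
      rw [fhat_pow hD hdef g hn] at h0
      have hn' : (1 : ℝ) ≤ (n : ℝ) := by exact_mod_cast hn
      nlinarith
    · have hlne : l ≠ [] := by
        intro hcon
        have := congrArg List.length hcon
        rw [hl] at this
        simp at this
        omega
      have hchain := phi_prod_le w hwne hub l hlne
      have hsum : (l.map (phi w)).sum ≤ 9 * (l.length : ℝ) := by
        have hle : ∀ x ∈ l.map (phi w), x ≤ (9 : ℝ) := by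
          intro x hx
          rw [List.mem_map] at hx
          obtain ⟨a, ha, rfl⟩ := hx
          rw [hl, List.mem_ofFn] at ha
          obtain ⟨i, rfl⟩ := ha
          exact phi_comm_le w hwne hub _ _
        have h9 := List.sum_le_card_nsmul (l.map (phi w)) 9 hle
        rw [List.length_map] at h9
        calc (l.map (phi w)).sum ≤ l.length • (9 : ℝ) := h9
          _ = 9 * l.length := by rw [nsmul_eq_mul]; ring
      have hlenl : (l.length : ℝ) = m := by rw [hl, List.length_ofFn]
      have hfx : phi w (g ^ n) ≤ 12 * m - 3 := by
        rw [hxl]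
        rw [hlenl] at hchain hsum
        linarith
      have hfhat1 : fhat (phi w) hdef (g ^ n) ≤ phi w (g ^ n) + 3 := by
        have h := fhat_le hD hdef (g ^ n) (N := 1) one_ne_zero
        simpa [pow_one] using h
      have h2 : (n : ℝ) ≤ fhat (phi w) hdef (g ^ n) := by
        rw [fhat_pow hD hdef g hn]
        have hn0 : (0 : ℝ) ≤ (n : ℝ) := by positivity
        nlinarith
      have hfinal : (n : ℝ) ≤ 12 * m := by linarith
      exact_mod_cast hfinal

end FreeProd

section MainAux

variable {G : Type*} [Group G]

lemma sclE_eq_zero_of_isConj {g : G} (h : IsConj g g⁻¹) : sclE g = 0 := by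
  obtain ⟨c, hc⟩ := isConj_iff.mp h
  have hginv : c * g⁻¹ * c⁻¹ = g := by
    have h1 : (c * g * c⁻¹)⁻¹ = g := by rw [hc, inv_inv]
    rw [mul_inv_rev, mul_inv_rev, inv_inv] at h1
    rw [← mul_assoc] at h1
    exact h1
  have hcl : ∀ n : ℕ, 1 ≤ n → clE (g ^ (2 * n)) ≤ 1 := by
    intro n hn
    have h2 : c * (g ^ n)⁻¹ * c⁻¹ = g ^ n := by
      rw [← inv_pow, ← conj_pow, hginv]
    have hcomm : g ^ (2 * n) = ⁅g ^ n, c⁆ := by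
      rw [commutatorElement_def]
      calc g ^ (2 * n) = g ^ n * g ^ n := by rw [two_mul, pow_add]
        _ = g ^ n * (c * (g ^ n)⁻¹ * c⁻¹) := by rw [h2]
        _ = g ^ n * c * (g ^ n)⁻¹ * c⁻¹ := by group
    have h1m : (1 : ℕ) ∈ clSet (g ^ (2 * n)) := by
      refine ⟨fun _ => (g ^ n, c), ?_⟩
      rw [hcomm]
      simp
    unfold clE
    apply sInf_le
    exact ⟨1, h1m, by simp⟩
  have hle : ∀ n : ℕ, 1 ≤ n → sclE g ≤ 1 / ((2 * n : ℕ) : ℝ≥0∞) := by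
    intro n hn
    have hpos : 0 < 2 * n := by omega
    calc sclE g ≤ clE (g ^ ((⟨2 * n, hpos⟩ : ℕ+) : ℕ)) / (((⟨2 * n, hpos⟩ : ℕ+) : ℕ) : ℝ≥0∞) :=
          iInf_le _ (⟨2 * n, hpos⟩ : ℕ+)
      _ ≤ 1 / ((2 * n : ℕ) : ℝ≥0∞) := by
          apply ENNReal.div_le_div_right
          exact hcl n hn
  by_contra hne
  obtain ⟨N, hN⟩ := ENNReal.exists_inv_nat_lt hne
  have hstep : sclE g ≤ ((N : ℝ≥0∞))⁻¹ := by
    calc sclE g ≤ 1 / ((2 * (N + 1) : ℕ) : ℝ≥0∞) := hle (N + 1) (by omega)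
      _ ≤ ((N : ℝ≥0∞))⁻¹ := by
          rw [one_div]
          rw [ENNReal.inv_le_inv]
          exact_mod_cast (by omega : N ≤ 2 * (N + 1))
  exact absurd (lt_of_lt_of_le hN hstep) (lt_irrefl _)

lemma sclE_ge_of_core {g : G} (hcore : ∀ n : ℕ, 1 ≤ n → ∀ m ∈ clSet (g ^ n), n ≤ 12 * m) :
    (1 / 12 : ℝ≥0∞) ≤ sclE g := by
  apply le_iInf
  intro n
  have hn0 : ((n : ℕ) : ℝ≥0∞) ≠ 0 := Nat.cast_ne_zero.mpr n.2.ne'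
  have hntop : ((n : ℕ) : ℝ≥0∞) ≠ ⊤ := ENNReal.natCast_ne_top _
  rw [ENNReal.le_div_iff_mul_le (Or.inl hn0) (Or.inl hntop)]
  unfold clE
  apply le_sInf
  rintro b ⟨m, hm, rfl⟩
  have h := hcore (n : ℕ) n.2 m hm
  have h12 : ((12 : ℕ) : ℝ≥0∞) ≠ 0 := by norm_num
  calc (1 / 12 : ℝ≥0∞) * n = (n : ℝ≥0∞) / 12 := by
        rw [one_div, div_eq_mul_inv, mul_comm]
    _ ≤ (m : ℝ≥0∞) := by
        rw [ENNReal.div_le_iff_le_mul (Or.inl (by norm_num)) (Or.inl (by norm_num))]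
        calc ((n : ℕ) : ℝ≥0∞) ≤ ((12 * m : ℕ) : ℝ≥0∞) := by exact_mod_cast h
          _ = (m : ℝ≥0∞) * 12 := by push_cast; ring

end MainAux

end SclGap

variable {ι : Type*} {M : ι → Type*} [∀ i, Group (M i)] [∀ i, IsCyclic (M i)]

/-- Spectral gap for elements of free products of cyclic groups: if `g` is not conjugate
into any free factor, then `scl(g) ≥ 1/12` or `scl(g) = 0`, and the latter happens exactly
when `g` is conjugate to `g⁻¹`. -/
theorem scl_gap_free_product_of_cyclic (g : CoprodI M)
    (hg : ∀ (i : ι) (x : M i), ¬ IsConj (CoprodI.of x) g) :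
    ((1 / 12 : ℝ≥0∞) ≤ sclE g ∨ sclE g = 0) ∧ (sclE g = 0 ↔ IsConj g g⁻¹) := by
  by_cases hconj : IsConj g g⁻¹
  · have hz := SclGap.sclE_eq_zero_of_isConj hconj
    exact ⟨Or.inr hz, ⟨fun _ => hconj, fun _ => hz⟩⟩
  · have hcore := SclGap.gap_core g hg hconj
    have hgap := SclGap.sclE_ge_of_core hcore
    have hne : sclE g ≠ 0 := by
      intro h
      rw [h] at hgap
      simp at hgap
    exact ⟨Or.inl hgap, ⟨fun h => absurd h hne, fun h => absurd h hconj⟩⟩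
end
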